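/- arXiv:2407.02619 — 7 statements merged into one kernel-verified Lean document; each statement's English description precedes it below -/
import Mathlib

section
/- The composition of two signed seminorms is a signed seminorm: given signed seminorms ||·||_1 and ||·||_2 on V, the map v ↦ ||v||_1 if |||v||_1| ≥ |||v||_2|, and ||v||_2 otherwise, is again a signed seminorm on V. -/
noncomputable section

variable {K : Type*} [Field K] [LinearOrder K] [IsStrictOrderedRing K] {V : Type*} [AddCommGroup V] [Module K V]

/-- The sign of an element of a linear ordered field, as a real number. -/
def sgn (x : K) : ℝ := if 0 < x then 1 else if x < 0 then -1 else 0

/-- `av` is a non-Archimedean absolute value. -/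
def IsNonarch (av : AbsoluteValue K ℝ) : Prop := ∀ x y : K, av (x + y) ≤ max (av x) (av y)

/-- `av` is compatible with the order on `K`: `0 ≤ a ≤ b` implies `av a ≤ av b`. -/
def Compat (av : AbsoluteValue K ℝ) : Prop := ∀ x y : K, 0 ≤ x → x ≤ y → av x ≤ av y

/-- `K` is real closed. -/
def IsRealClosed' (K : Type*) [Field K] [LinearOrder K] [IsStrictOrderedRing K] : Prop :=
  (∀ x : K, 0 ≤ x → ∃ y, y * y = x) ∧
  ∀ p : Polynomial K, Odd p.natDegree → ∃ x, p.eval x = 0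

/-- A signed seminorm on `V` with respect to the absolute value `av` on `K`. -/
def IsSignedSeminorm (av : AbsoluteValue K ℝ) (N : V → ℝ) : Prop :=
  (∀ (c : K) (v : V), N (c • v) = sgn c * av c * N v) ∧
  (∀ v w : V, min (N v) (N w) ≤ N (v + w) ∧ N (v + w) ≤ max (N v) (N w))

lemma ss_neg {av : AbsoluteValue K ℝ} {N : V → ℝ} (h : IsSignedSeminorm av N) (v : V) :
    N (-v) = -N v := by
  have := h.1 (-1 : K) v
  simp only [neg_one_smul] at this
  rw [this]
  have h1 : sgn (-1 : K) = -1 := by unfold sgn; norm_num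
  rw [h1, av.map_neg, av.map_one]
  ring

lemma ss_absle {av : AbsoluteValue K ℝ} {N : V → ℝ} (h : IsSignedSeminorm av N) (v w : V) :
    |N (v + w)| ≤ max |N v| |N w| := by
  obtain ⟨hlo, hhi⟩ := h.2 v w
  rw [abs_le]
  constructor
  · rcases le_total (N v) (N w) with hc | hc <;>
      [rw [min_eq_left hc] at hlo; rw [min_eq_right hc] at hlo] <;>
      [exact le_trans (neg_le_neg (le_max_left _ _)) (le_trans (neg_abs_le _) hlo);
       exact le_trans (neg_le_neg (le_max_right _ _)) (le_trans (neg_abs_le _) hlo)]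
  · exact hhi.trans (max_le_max (le_abs_self _) (le_abs_self _))

lemma ss_dom {av : AbsoluteValue K ℝ} {N : V → ℝ} (h : IsSignedSeminorm av N) {v w : V}
    (h' : |N w| < |N v|) : N (v + w) = N v := by
  have hle : |N (v + w)| ≤ |N v| := (ss_absle h v w).trans_eq (max_eq_left h'.le)
  have hvw : (v + w) + (-w) = v := by abel
  have hge : |N v| ≤ |N (v + w)| := by
    by_contra hc
    push_neg at hc
    have := ss_absle h (v + w) (-w)
    rw [hvw, ss_neg h, abs_neg] at this
    exact absurd this (not_le.mpr (max_lt hc h'))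
  have habs : |N (v + w)| = |N v| := le_antisymm hle hge
  rcases abs_eq_abs.mp habs with he | he
  · exact he
  · exfalso
    obtain ⟨hlo, hhi⟩ := h.2 v w
    rw [he] at hlo hhi
    rcases abs_cases (N v) with ⟨e1, e2⟩ | ⟨e1, e2⟩ <;>
      rcases abs_cases (N w) with ⟨f1, f2⟩ | ⟨f1, f2⟩ <;>
      simp only [min_def, max_def] at hlo hhi <;> split_ifs at hlo hhi <;> linarith

/-- The composition of two signed seminorms is again a signed seminorm. -/
theorem signedSeminorm_comp
    (hK : IsRealClosed' K) (av : AbsoluteValue K ℝ) (hna : IsNonarch av) (hcomp : Compat av)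
    [FiniteDimensional K V] (N₁ N₂ : V → ℝ)
    (h₁ : IsSignedSeminorm av N₁) (h₂ : IsSignedSeminorm av N₂) :
    IsSignedSeminorm av (fun v => if |N₂ v| ≤ |N₁ v| then N₁ v else N₂ v) := by
  set M : V → ℝ := fun v => if |N₂ v| ≤ |N₁ v| then N₁ v else N₂ v with hM
  have hMabs : ∀ v, |M v| = max |N₁ v| |N₂ v| := by
    intro v
    simp only [hM]
    split_ifs with hc
    · exact (max_eq_left hc).symm
    · exact (max_eq_right (le_of_not_ge hc)).symm
  have hle1 : ∀ x, |N₁ x| ≤ |M x| := fun x => (hMabs x) ▸ le_max_left _ _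
  have hle2 : ∀ x, |N₂ x| ≤ |M x| := fun x => (hMabs x) ▸ le_max_right _ _
  have hMdom : ∀ v w : V, |M w| < |M v| → M (v + w) = M v := by
    intro v w hlt
    by_cases hc : |N₂ v| ≤ |N₁ v|
    · have hMv : M v = N₁ v := if_pos hc
      have h1w : |N₁ w| < |N₁ v| := lt_of_le_of_lt (hle1 w) (by rw [← hMv]; exact hlt)
      have e1 : N₁ (v + w) = N₁ v := ss_dom h₁ h1w
      have e2 : |N₂ (v + w)| ≤ |N₁ (v + w)| := by
        rw [e1]
        refine (ss_absle h₂ v w).trans (max_le hc ?_)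
        exact le_trans (hle2 w) (le_trans hlt.le (le_of_eq (by rw [hMv])))
      show (if |N₂ (v + w)| ≤ |N₁ (v + w)| then N₁ (v + w) else N₂ (v + w)) = M v
      rw [if_pos e2, e1, hMv]
    · push_neg at hc
      have hMv : M v = N₂ v := if_neg (not_le.mpr hc)
      have h2w : |N₂ w| < |N₂ v| := lt_of_le_of_lt (hle2 w) (by rw [← hMv]; exact hlt)
      have e2 : N₂ (v + w) = N₂ v := ss_dom h₂ h2w
      have e1 : ¬ |N₂ (v + w)| ≤ |N₁ (v + w)| := by
        rw [e2]
        refine not_le.mpr (lt_of_le_of_lt (ss_absle h₁ v w) (max_lt hc ?_))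
        exact lt_of_le_of_lt (hle1 w) (by rw [← hMv]; exact hlt)
      show (if |N₂ (v + w)| ≤ |N₁ (v + w)| then N₁ (v + w) else N₂ (v + w)) = M v
      rw [if_neg e1, e2, hMv]
  have hMabsle : ∀ v w : V, |M (v + w)| ≤ max |M v| |M w| := by
    intro v w
    rw [hMabs]
    refine max_le ((ss_absle h₁ v w).trans (max_le ?_ ?_))
      ((ss_absle h₂ v w).trans (max_le ?_ ?_))
    · exact le_trans (hle1 v) (le_max_left _ _)
    · exact le_trans (hle1 w) (le_max_right _ _)
    · exact le_trans (hle2 v) (le_max_left _ _)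
    · exact le_trans (hle2 w) (le_max_right _ _)
  have hMeq : ∀ v w : V, M v = M w → M (v + w) = M v := by
    intro v w heq
    by_cases hcv : |N₂ v| ≤ |N₁ v| <;> by_cases hcw : |N₂ w| ≤ |N₁ w|
    · have hMv : M v = N₁ v := if_pos hcv
      have hMw : M w = N₁ w := if_pos hcw
      have he : N₁ v = N₁ w := by rw [← hMv, ← hMw, heq]
      have e1 : N₁ (v + w) = N₁ v := by
        have h' := h₁.2 v w
        rw [← he, min_self, max_self] at h'
        exact le_antisymm h'.2 h'.1
      have e2 : |N₂ (v + w)| ≤ |N₁ (v + w)| := by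
        rw [e1]
        exact (ss_absle h₂ v w).trans (max_le (hcv.trans (le_refl _))
          (hcw.trans (by rw [he])))
      show (if |N₂ (v + w)| ≤ |N₁ (v + w)| then N₁ (v + w) else N₂ (v + w)) = M v
      rw [if_pos e2, e1, hMv]
    · push_neg at hcw
      have hMv : M v = N₁ v := if_pos hcv
      have hMw : M w = N₂ w := if_neg (not_le.mpr hcw)
      have he : N₁ v = N₂ w := by rw [← hMv, ← hMw, heq]
      have e1 : N₁ (v + w) = N₁ v := ss_dom h₁ (by rw [he]; exact hcw)
      have e2 : |N₂ (v + w)| ≤ |N₁ (v + w)| := by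
        rw [e1]
        exact (ss_absle h₂ v w).trans (max_le hcv (le_of_eq (by rw [he])))
      show (if |N₂ (v + w)| ≤ |N₁ (v + w)| then N₁ (v + w) else N₂ (v + w)) = M v
      rw [if_pos e2, e1, hMv]
    · push_neg at hcv
      have hMv : M v = N₂ v := if_neg (not_le.mpr hcv)
      have hMw : M w = N₁ w := if_pos hcw
      have he : N₂ v = N₁ w := by rw [← hMv, ← hMw, heq]
      have e1 : N₁ (v + w) = N₁ w := by
        rw [add_comm]
        exact ss_dom h₁ (by rw [← he]; exact hcv)
      have e2 : |N₂ (v + w)| ≤ |N₁ (v + w)| := by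
        rw [e1]
        exact (ss_absle h₂ v w).trans (max_le (le_of_eq (by rw [he])) (hcw.trans (le_refl _)))
      show (if |N₂ (v + w)| ≤ |N₁ (v + w)| then N₁ (v + w) else N₂ (v + w)) = M v
      rw [if_pos e2, e1, hMv, he]
    · push_neg at hcv; push_neg at hcw
      have hMv : M v = N₂ v := if_neg (not_le.mpr hcv)
      have hMw : M w = N₂ w := if_neg (not_le.mpr hcw)
      have he : N₂ v = N₂ w := by rw [← hMv, ← hMw, heq]
      have e2 : N₂ (v + w) = N₂ v := by
        have h' := h₂.2 v w
        rw [← he, min_self, max_self] at h'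
        exact le_antisymm h'.2 h'.1
      have e1 : ¬ |N₂ (v + w)| ≤ |N₁ (v + w)| := by
        rw [e2]
        refine not_le.mpr (lt_of_le_of_lt (ss_absle h₁ v w) (max_lt hcv ?_))
        rw [he] at hcv ⊢
        exact hcw
      show (if |N₂ (v + w)| ≤ |N₁ (v + w)| then N₁ (v + w) else N₂ (v + w)) = M v
      rw [if_neg e1, e2, hMv]
  constructor
  · intro c v
    show M (c • v) = sgn c * av c * M v
    simp only [hM]
    rw [h₁.1 c v, h₂.1 c v]
    by_cases hc0 : c = 0
    · subst hc0
      simp [sgn]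
    · have hsg : |sgn c| = 1 := by
        rcases lt_or_gt_of_ne hc0 with h | h
        · simp [sgn, asymm h, h]
        · simp [sgn, h]
      simp only [abs_mul, hsg, one_mul, abs_of_nonneg (av.nonneg c),
        mul_le_mul_iff_right₀ (av.pos hc0)]
      split_ifs <;> ring
  · intro v w
    show min (M v) (M w) ≤ M (v + w) ∧ M (v + w) ≤ max (M v) (M w)
    rcases lt_trichotomy |M v| |M w| with hlt | heq | hgt
    · have h' : M (v + w) = M w := by rw [add_comm]; exact hMdom w v hlt
      rw [h']
      exact ⟨min_le_right _ _, le_max_right _ _⟩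
    · by_cases he : M v = M w
      · rw [hMeq v w he]
        exact ⟨min_le_left _ _, le_max_left _ _⟩
      · have habs2 : |M (v + w)| ≤ |M v| := (hMabsle v w).trans (by rw [heq, max_self])
        obtain ⟨hb1, hb2⟩ := abs_le.mp habs2
        rcases abs_eq_abs.mp heq with h' | h'
        · exact absurd h' he
        · rcases abs_cases (M v) with ⟨e1, e2⟩ | ⟨e1, e2⟩ <;>
            constructor <;> simp only [min_def, max_def] <;> split_ifs <;> linarith
    · rw [hMdom v w hgt]
      exact ⟨min_le_left _ _, le_max_left _ _⟩
end
end

section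
/- For any ordered basis B = (b_1,…,b_n) of V and parameters c_1 ≥ c_2 ≥ … ≥ c_n ≥ 0, the map sending v = Σ λ_i b_i to sgn(λ_j)|λ_j| c_j, where j is minimal with |λ_j| c_j = max_i |λ_i| c_i, is a signed seminorm on V. -/
noncomputable section

variable {K : Type*} [Field K] [LinearOrder K] [IsStrictOrderedRing K] {V : Type*} [AddCommGroup V] [Module K V]

/-- `j` is the minimal index at which `av (lam j) * c j` attains its maximum. -/
def DiagAt {n : ℕ} (a : K → ℝ) (lam : Fin n → K) (c : Fin n → ℝ) (j : Fin n) : Prop :=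
  (∀ i, a (lam i) * c i ≤ a (lam j) * c j) ∧
  (∀ i, i < j → a (lam i) * c i < a (lam j) * c j)

lemma sgn_of_pos' {x : K} (h : 0 < x) : sgn x = 1 := by simp [sgn, h]
lemma sgn_of_neg' {x : K} (h : x < 0) : sgn x = -1 := by simp [sgn, h, asymm h]
lemma sgn_zero' : sgn (0 : K) = 0 := by simp [sgn]

lemma sgn_mul' (x y : K) : sgn (x * y) = sgn x * sgn y := by
  rcases lt_trichotomy x 0 with hx|rfl|hx
  · rcases lt_trichotomy y 0 with hy|rfl|hy
    · rw [sgn_of_pos' (mul_pos_of_neg_of_neg hx hy), sgn_of_neg' hx, sgn_of_neg' hy]; ring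
    · rw [mul_zero, sgn_zero']; ring
    · rw [sgn_of_neg' (mul_neg_of_neg_of_pos hx hy), sgn_of_neg' hx, sgn_of_pos' hy]; ring
  · rw [zero_mul, sgn_zero']; ring
  · rcases lt_trichotomy y 0 with hy|rfl|hy
    · rw [sgn_of_neg' (mul_neg_of_pos_of_neg hx hy), sgn_of_pos' hx, sgn_of_neg' hy]; ring
    · rw [mul_zero, sgn_zero']; ring
    · rw [sgn_of_pos' (mul_pos hx hy), sgn_of_pos' hx, sgn_of_pos' hy]; ring

lemma av_sgn_add_eq_left (av : AbsoluteValue K ℝ) (hna : IsNonarch av) (hcomp : Compat av)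
    {x y : K} (h : av y < av x) : av (x + y) = av x ∧ sgn (x + y) = sgn x := by
  have hx0 : x ≠ 0 := by rintro rfl; simp at h; linarith [av.nonneg y]
  have h1 : av (x + y) ≤ av x := (hna x y).trans (by simp [h.le])
  have h2 : av x ≤ av (x + y) := by
    have := hna (x + y) (-y)
    simp only [add_neg_cancel_right, av.map_neg] at this
    rcases le_max_iff.mp this with h'|h'
    · exact h'
    · linarith
  refine ⟨le_antisymm h1 h2, ?_⟩
  rcases hx0.lt_or_gt with hx|hx
  · have hxy : x + y < 0 := by
      by_contra hc
      push_neg at hc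
      have : av (-x) ≤ av y := hcomp (-x) y (by linarith) (by linarith)
      rw [av.map_neg] at this; linarith
    rw [sgn_of_neg' hxy, sgn_of_neg' hx]
  · have hxy : 0 < x + y := by
      by_contra hc
      push_neg at hc
      have : av x ≤ av (-y) := hcomp x (-y) hx.le (by linarith)
      rw [av.map_neg] at this; linarith
    rw [sgn_of_pos' hxy, sgn_of_pos' hx]

lemma av_sgn_add_same (av : AbsoluteValue K ℝ) (hna : IsNonarch av) (hcomp : Compat av)
    {x y : K} (hs : (0 < x ∧ 0 < y) ∨ (x < 0 ∧ y < 0)) (hav : av x = av y) :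
    av (x + y) = av x ∧ sgn (x + y) = sgn x := by
  have h1 : av (x + y) ≤ av x := (hna x y).trans (by simp [hav.ge])
  rcases hs with ⟨hx, hy⟩ | ⟨hx, hy⟩
  · have h2 : av x ≤ av (x + y) := hcomp x (x + y) hx.le (by linarith)
    have hxy : 0 < x + y := by linarith
    exact ⟨le_antisymm h1 h2, by rw [sgn_of_pos' hxy, sgn_of_pos' hx]⟩
  · have h2 : av x ≤ av (x + y) := by
      have := hcomp (-x) (-(x + y)) (by linarith) (by linarith)
      rwa [av.map_neg, av.map_neg] at this
    have hxy : x + y < 0 := by linarith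
    exact ⟨le_antisymm h1 h2, by rw [sgn_of_neg' hxy, sgn_of_neg' hx]⟩

/-- For an ordered basis `B` and parameters `c₁ ≥ … ≥ cₙ ≥ 0`, the map sending
`v = Σ λᵢ bᵢ` to `sgn(λⱼ)|λⱼ| cⱼ`, where `j` is minimal with `|λⱼ| cⱼ` maximal,
is a signed seminorm. -/
theorem diagonal_map_isSignedSeminorm {n : ℕ}
    (hK : IsRealClosed' K) (av : AbsoluteValue K ℝ) (hna : IsNonarch av) (hcomp : Compat av)
    (B : Module.Basis (Fin n) K V) (c : Fin n → ℝ) (hmono : Antitone c) (hpos : ∀ i, 0 ≤ c i) :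
    ∃ N : V → ℝ, IsSignedSeminorm av N ∧
      ∀ (v : V) (j : Fin n), DiagAt (fun x => av x) (fun i => B.repr v i) c j →
        N v = sgn (B.repr v j) * av (B.repr v j) * c j := by
  classical
  rcases Nat.eq_zero_or_pos n with rfl | hn
  · exact ⟨fun _ => 0, ⟨fun c0 v => by ring, fun v w => by norm_num⟩, fun v j => j.elim0⟩
  -- existence of the minimal argmax
  have hex : ∀ v : V, ∃ j, DiagAt (fun x => av x) (fun i => (B.repr v) i) c j := by
    intro v
    have h1 : (Finset.univ.filter
        (fun i => ∀ k, av (B.repr v k) * c k ≤ av (B.repr v i) * c i)).Nonempty := by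
      obtain ⟨i, -, hi⟩ := Finset.exists_max_image (Finset.univ : Finset (Fin n))
        (fun i => av (B.repr v i) * c i) ⟨⟨0, hn⟩, Finset.mem_univ _⟩
      exact ⟨i, Finset.mem_filter.mpr ⟨Finset.mem_univ _, fun k => hi k (Finset.mem_univ _)⟩⟩
    refine ⟨(Finset.univ.filter
        (fun i => ∀ k, av (B.repr v k) * c k ≤ av (B.repr v i) * c i)).min' h1,
      (Finset.mem_filter.mp (Finset.min'_mem _ h1)).2, ?_⟩
    intro i hi
    by_cases hmem : i ∈ Finset.univ.filter
        (fun i => ∀ k, av (B.repr v k) * c k ≤ av (B.repr v i) * c i)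
    · exact absurd (Finset.min'_le _ _ hmem) (not_le.mpr hi)
    · simp only [Finset.mem_filter, Finset.mem_univ, true_and, not_forall, not_le] at hmem
      obtain ⟨k, hk⟩ := hmem
      exact lt_of_lt_of_le hk ((Finset.mem_filter.mp (Finset.min'_mem _ h1)).2 k)
  choose J hDiag using hex
  -- uniqueness of the minimal argmax
  have huniq : ∀ (v : V) (j : Fin n),
      DiagAt (fun x => av x) (fun i => (B.repr v) i) c j → j = J v := by
    intro v j hj
    rcases lt_trichotomy j (J v) with h|h|h
    · exact absurd (hj.1 (J v)) (not_le.mpr ((hDiag v).2 j h))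
    · exact h
    · exact absurd ((hDiag v).1 j) (not_le.mpr (hj.2 (J v) h))
  -- the candidate map
  refine ⟨fun v => sgn (B.repr v (J v)) * av (B.repr v (J v)) * c (J v), ⟨?_, ?_⟩, ?_⟩
  · -- scaling
    intro c0 v
    rcases eq_or_ne c0 0 with rfl | hc0
    · have h0 : (0 : K) • v = (0 : V) := zero_smul K v
      rw [h0]
      have hz : (B.repr (0 : V)) (J 0) = 0 := by simp
      show sgn ((B.repr (0:V)) (J 0)) * av ((B.repr (0:V)) (J 0)) * c (J 0)
        = sgn (0:K) * av 0 * (sgn (B.repr v (J v)) * av (B.repr v (J v)) * c (J v))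
      rw [hz, sgn_zero']
      simp
    · have hrepr : ∀ i, (B.repr (c0 • v)) i = c0 * (B.repr v) i := by
        intro i; rw [map_smul]; simp
      have havpos : 0 < av c0 := av.pos hc0
      have hD : DiagAt (fun x => av x) (fun i => (B.repr (c0 • v)) i) c (J v) := by
        obtain ⟨h1, h2⟩ := hDiag v
        constructor
        · intro i
          show av ((B.repr (c0 • v)) i) * c i ≤ av ((B.repr (c0 • v)) (J v)) * c (J v)
          rw [hrepr i, hrepr (J v), map_mul, map_mul]
          calc av c0 * av (B.repr v i) * c i = av c0 * (av (B.repr v i) * c i) := by ring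
            _ ≤ av c0 * (av (B.repr v (J v)) * c (J v)) :=
                mul_le_mul_of_nonneg_left (h1 i) havpos.le
            _ = av c0 * av (B.repr v (J v)) * c (J v) := by ring
        · intro i hi
          show av ((B.repr (c0 • v)) i) * c i < av ((B.repr (c0 • v)) (J v)) * c (J v)
          rw [hrepr i, hrepr (J v), map_mul, map_mul]
          calc av c0 * av (B.repr v i) * c i = av c0 * (av (B.repr v i) * c i) := by ring
            _ < av c0 * (av (B.repr v (J v)) * c (J v)) :=
                (mul_lt_mul_iff_right₀ havpos).mpr (h2 i hi)
            _ = av c0 * av (B.repr v (J v)) * c (J v) := by ring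
      have hJeq := huniq (c0 • v) (J v) hD
      show sgn ((B.repr (c0 • v)) (J (c0 • v))) * av ((B.repr (c0 • v)) (J (c0 • v)))
          * c (J (c0 • v))
        = sgn c0 * av c0 * (sgn (B.repr v (J v)) * av (B.repr v (J v)) * c (J v))
      rw [← hJeq, hrepr (J v), sgn_mul', map_mul]
      ring
  · -- additivity
    intro v w
    -- |N u| ≤ f u (J u)
    have habs : ∀ u : V,
        sgn (B.repr u (J u)) * av (B.repr u (J u)) * c (J u)
          ≤ av (B.repr u (J u)) * c (J u) ∧
        -(av (B.repr u (J u)) * c (J u))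
          ≤ sgn (B.repr u (J u)) * av (B.repr u (J u)) * c (J u) := by
      intro u
      have h0 : 0 ≤ av (B.repr u (J u)) * c (J u) := mul_nonneg (av.nonneg _) (hpos _)
      rcases lt_trichotomy (B.repr u (J u)) 0 with h|h|h
      · rw [sgn_of_neg' h]; constructor <;> linarith
      · rw [h, sgn_zero']; simp
      · rw [sgn_of_pos' h]; constructor <;> linarith
    -- pointwise ultrametric bound
    have hle : ∀ (v w : V) (i : Fin n), av (B.repr (v + w) i) * c i
        ≤ max (av (B.repr v i) * c i) (av (B.repr w i) * c i) := by
      intro v w i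
      have h1 : (B.repr (v + w)) i = (B.repr v) i + (B.repr w) i := by simp
      rw [h1]
      calc av (B.repr v i + B.repr w i) * c i
          ≤ max (av (B.repr v i)) (av (B.repr w i)) * c i :=
            mul_le_mul_of_nonneg_right (hna _ _) (hpos i)
        _ = _ := max_mul_of_nonneg _ _ (hpos i)
    -- consequences of strict domination at J v
    have strictconseq : ∀ v w : V,
        av (B.repr w (J v)) * c (J v) < av (B.repr v (J v)) * c (J v) →
        av (B.repr v (J v) + B.repr w (J v)) = av (B.repr v (J v)) ∧
        sgn (B.repr v (J v) + B.repr w (J v)) = sgn (B.repr v (J v)) := by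
      intro v w hstrict
      have hc : 0 < c (J v) := by
        rcases (hpos (J v)).lt_or_eq with h|h
        · exact h
        · exfalso; rw [← h, mul_zero, mul_zero] at hstrict; exact lt_irrefl _ hstrict
      exact av_sgn_add_eq_left av hna hcomp ((mul_lt_mul_iff_left₀ hc).mp hstrict)
    -- the key dominance lemma
    have key : ∀ v w : V,
        (∀ i, av (B.repr w i) * c i ≤ av (B.repr v (J v)) * c (J v)) →
        (∀ i, i < J v → av (B.repr w i) * c i < av (B.repr v (J v)) * c (J v)) →
        av (B.repr v (J v) + B.repr w (J v)) = av (B.repr v (J v)) →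
        sgn (B.repr v (J v) + B.repr w (J v)) = sgn (B.repr v (J v)) →
        sgn (B.repr (v + w) (J (v + w))) * av (B.repr (v + w) (J (v + w))) * c (J (v + w))
          = sgn (B.repr v (J v)) * av (B.repr v (J v)) * c (J v) := by
      intro v w hball hblt he1 he2
      have hsum : ∀ i : Fin n, (B.repr (v + w)) i = (B.repr v) i + (B.repr w) i :=
        fun i => by simp
      have heq : av (B.repr (v + w) (J v)) * c (J v) = av (B.repr v (J v)) * c (J v) := by
        rw [hsum (J v), he1]
      have hD : DiagAt (fun x => av x) (fun i => (B.repr (v + w)) i) c (J v) := by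
        constructor
        · intro i
          show av (B.repr (v + w) i) * c i ≤ av (B.repr (v + w) (J v)) * c (J v)
          rw [heq]
          exact (hle v w i).trans (max_le ((hDiag v).1 i) (hball i))
        · intro i hi
          show av (B.repr (v + w) i) * c i < av (B.repr (v + w) (J v)) * c (J v)
          rw [heq]
          exact lt_of_le_of_lt (hle v w i) (max_lt ((hDiag v).2 i hi) (hblt i hi))
      have hJeq := huniq (v + w) (J v) hD
      rw [← hJeq, hsum (J v), he1, he2]
    show min (sgn (B.repr v (J v)) * av (B.repr v (J v)) * c (J v))
          (sgn (B.repr w (J w)) * av (B.repr w (J w)) * c (J w))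
        ≤ sgn (B.repr (v + w) (J (v + w))) * av (B.repr (v + w) (J (v + w))) * c (J (v + w)) ∧
        sgn (B.repr (v + w) (J (v + w))) * av (B.repr (v + w) (J (v + w))) * c (J (v + w))
        ≤ max (sgn (B.repr v (J v)) * av (B.repr v (J v)) * c (J v))
          (sgn (B.repr w (J w)) * av (B.repr w (J w)) * c (J w))
    rcases lt_trichotomy (av (B.repr w (J w)) * c (J w)) (av (B.repr v (J v)) * c (J v))
      with hlt | heqM | hlt
    · -- Mw < Mv : v dominates
      have hstrict : av (B.repr w (J v)) * c (J v) < av (B.repr v (J v)) * c (J v) :=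
        lt_of_le_of_lt ((hDiag w).1 (J v)) hlt
      obtain ⟨he1, he2⟩ := strictconseq v w hstrict
      rw [key v w (fun i => ((hDiag w).1 i).trans hlt.le)
        (fun i _ => lt_of_le_of_lt ((hDiag w).1 i) hlt) he1 he2]
      exact ⟨min_le_left _ _, le_max_left _ _⟩
    · -- Mw = Mv
      rcases lt_trichotomy (J v) (J w) with hj | hj | hj
      · -- J v < J w : v dominates
        have hstrict : av (B.repr w (J v)) * c (J v) < av (B.repr v (J v)) * c (J v) :=
          lt_of_lt_of_le ((hDiag w).2 (J v) hj) heqM.le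
        obtain ⟨he1, he2⟩ := strictconseq v w hstrict
        rw [key v w (fun i => ((hDiag w).1 i).trans heqM.le)
          (fun i hi => lt_of_lt_of_le ((hDiag w).2 i (hi.trans hj)) heqM.le) he1 he2]
        exact ⟨min_le_left _ _, le_max_left _ _⟩
      · -- J v = J w
        rcases (mul_nonneg (av.nonneg (B.repr v (J v))) (hpos (J v))).eq_or_lt with hM0 | hMpos
        · -- everything is zero
          have hMw0 : av (B.repr w (J w)) * c (J w) = 0 := by rw [heqM, ← hM0]
          have hNv : sgn (B.repr v (J v)) * av (B.repr v (J v)) * c (J v) = 0 := by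
            have := habs v; rw [← hM0] at this; linarith [this.1, this.2]
          have hNw : sgn (B.repr w (J w)) * av (B.repr w (J w)) * c (J w) = 0 := by
            have := habs w; rw [hMw0] at this; linarith [this.1, this.2]
          have hMu0 : av (B.repr (v + w) (J (v + w))) * c (J (v + w)) = 0 := by
            have h1 := (hle v w (J (v + w))).trans
              (max_le (((hDiag v).1 (J (v + w))).trans hM0.symm.le)
                (((hDiag w).1 (J (v + w))).trans hMw0.le))
            have h2 : 0 ≤ av (B.repr (v + w) (J (v + w))) * c (J (v + w)) :=
              mul_nonneg (av.nonneg _) (hpos _)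
            linarith
          have hNu : sgn (B.repr (v + w) (J (v + w))) * av (B.repr (v + w) (J (v + w)))
              * c (J (v + w)) = 0 := by
            have := habs (v + w); rw [hMu0] at this; linarith [this.1, this.2]
          rw [hNv, hNw, hNu]; simp
        · -- Mv > 0
          have hcj : 0 < c (J v) := by
            rcases (hpos (J v)).lt_or_eq with h|h
            · exact h
            · exfalso; rw [← h, mul_zero] at hMpos; exact lt_irrefl _ hMpos
          have havl : 0 < av (B.repr v (J v)) := by nlinarith [av.nonneg (B.repr v (J v))]
          have hlne : B.repr v (J v) ≠ 0 := av.pos_iff.mp havl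
          rw [← hj] at heqM
          have havn : av (B.repr w (J v)) = av (B.repr v (J v)) :=
            mul_right_cancel₀ hcj.ne' heqM
          have hnne : B.repr w (J v) ≠ 0 := av.pos_iff.mp (havn ▸ havl)
          -- N w expressed at J v
          have hNw : sgn (B.repr w (J w)) * av (B.repr w (J w)) * c (J w)
              = sgn (B.repr w (J v)) * av (B.repr w (J v)) * c (J v) := by rw [← hj]
          rcases hlne.lt_or_gt with hlneg | hlpos <;> rcases hnne.lt_or_gt with hnneg | hnpos
          · -- both negative: v + w dominated by v, N(v+w) = N v
            obtain ⟨he1, he2⟩ := av_sgn_add_same av hna hcomp (Or.inr ⟨hlneg, hnneg⟩) havn.symm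
            rw [key v w (fun i => ((hDiag w).1 i).trans (hj ▸ heqM.le))
              (fun i hi => lt_of_lt_of_le ((hDiag w).2 i (hj ▸ hi)) (hj ▸ heqM.le)) he1 he2]
            exact ⟨min_le_left _ _, le_max_left _ _⟩
          · -- λ < 0 < ν : opposite signs
            have hNv' : sgn (B.repr v (J v)) * av (B.repr v (J v)) * c (J v)
                = -(av (B.repr v (J v)) * c (J v)) := by rw [sgn_of_neg' hlneg]; ring
            have hNw' : sgn (B.repr w (J w)) * av (B.repr w (J w)) * c (J w)
                = av (B.repr v (J v)) * c (J v) := by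
              rw [hNw, sgn_of_pos' hnpos, havn]; ring
            have h1 := habs (v + w)
            have h2 : av (B.repr (v + w) (J (v + w))) * c (J (v + w))
                ≤ av (B.repr v (J v)) * c (J v) :=
              (hle v w (J (v + w))).trans (max_le ((hDiag v).1 (J (v + w)))
                (((hDiag w).1 (J (v + w))).trans (hj ▸ heqM.le)))
            rw [hNv', hNw']
            constructor
            · have := min_le_left (-(av (B.repr v (J v)) * c (J v)))
                (av (B.repr v (J v)) * c (J v))
              linarith [h1.2]
            · have := le_max_right (-(av (B.repr v (J v)) * c (J v)))
                (av (B.repr v (J v)) * c (J v))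
              linarith [h1.1]
          · -- λ > 0 > ν : opposite signs
            have hNv' : sgn (B.repr v (J v)) * av (B.repr v (J v)) * c (J v)
                = av (B.repr v (J v)) * c (J v) := by rw [sgn_of_pos' hlpos]; ring
            have hNw' : sgn (B.repr w (J w)) * av (B.repr w (J w)) * c (J w)
                = -(av (B.repr v (J v)) * c (J v)) := by
              rw [hNw, sgn_of_neg' hnneg, havn]; ring
            have h1 := habs (v + w)
            have h2 : av (B.repr (v + w) (J (v + w))) * c (J (v + w))
                ≤ av (B.repr v (J v)) * c (J v) :=
              (hle v w (J (v + w))).trans (max_le ((hDiag v).1 (J (v + w)))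
                (((hDiag w).1 (J (v + w))).trans (hj ▸ heqM.le)))
            rw [hNv', hNw']
            constructor
            · have := min_le_right (av (B.repr v (J v)) * c (J v))
                (-(av (B.repr v (J v)) * c (J v)))
              linarith [h1.2]
            · have := le_max_left (av (B.repr v (J v)) * c (J v))
                (-(av (B.repr v (J v)) * c (J v)))
              linarith [h1.1]
          · -- both positive
            obtain ⟨he1, he2⟩ := av_sgn_add_same av hna hcomp (Or.inl ⟨hlpos, hnpos⟩) havn.symm
            rw [key v w (fun i => ((hDiag w).1 i).trans (hj ▸ heqM.le))
              (fun i hi => lt_of_lt_of_le ((hDiag w).2 i (hj ▸ hi)) (hj ▸ heqM.le)) he1 he2]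
            exact ⟨min_le_left _ _, le_max_left _ _⟩
      · -- J w < J v : w dominates
        have hstrict : av (B.repr v (J w)) * c (J w) < av (B.repr w (J w)) * c (J w) :=
          lt_of_lt_of_le ((hDiag v).2 (J w) hj) heqM.ge
        obtain ⟨he1, he2⟩ := strictconseq w v hstrict
        rw [add_comm v w, key w v (fun i => ((hDiag v).1 i).trans heqM.ge)
          (fun i hi => lt_of_lt_of_le ((hDiag v).2 i (hi.trans hj)) heqM.ge) he1 he2]
        exact ⟨min_le_right _ _, le_max_right _ _⟩
    · -- Mv < Mw : w dominates
      have hstrict : av (B.repr v (J w)) * c (J w) < av (B.repr w (J w)) * c (J w) :=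
        lt_of_le_of_lt ((hDiag v).1 (J w)) hlt
      obtain ⟨he1, he2⟩ := strictconseq w v hstrict
      rw [add_comm v w, key w v (fun i => ((hDiag v).1 i).trans hlt.le)
        (fun i _ => lt_of_le_of_lt ((hDiag v).1 i) hlt) he1 he2]
      exact ⟨min_le_right _ _, le_max_right _ _⟩
  · -- characterization
    intro v j hD
    have hJeq := huniq v j hD
    rw [hJeq]
end
end

section
/- A non-trivial signed seminorm over a trivially valued real closed field K has finite image in ℝ. -/
noncomputable section

variable {K : Type*} [Field K] [LinearOrder K] [IsStrictOrderedRing K] {V : Type*} [AddCommGroup V] [Module K V]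

/-- The trivial absolute value. -/
def trivabs (x : K) : ℝ := if x = 0 then 0 else 1

/-- `K` is real closed. -/
def IsRealClosedField (K : Type*) [Field K] [LinearOrder K] [IsStrictOrderedRing K] : Prop :=
  (∀ x : K, 0 ≤ x → ∃ y, y * y = x) ∧
  ∀ p : Polynomial K, Odd p.natDegree → ∃ x, p.eval x = 0

/-- A signed seminorm on `V` with respect to the trivial absolute value on `K`
(note `sgn c * trivabs c = sgn c`). -/
def IsSignedSeminormTriv (N : V → ℝ) : Prop :=
  (∀ (c : K) (v : V), N (c • v) = sgn c * N v) ∧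
  (∀ v w : V, min (N v) (N w) ≤ N (v + w) ∧ N (v + w) ≤ max (N v) (N w))

/-- A non-trivial signed seminorm over a trivially valued real closed field
has finite image. -/
theorem signedSeminorm_finite_image
    (hK : IsRealClosedField K) [FiniteDimensional K V]
    (N : V → ℝ) (hN : IsSignedSeminormTriv (K := K) N) (hne : N ≠ 0) :
    (Set.range N).Finite := by
  have hzero : N 0 = 0 := by
    have h := hN.1 (0 : K) 0
    simp [sgn] at h
    simpa using h
  have hsgn : ∀ c : K, |sgn c| ≤ 1 := by
    intro c
    unfold sgn
    split_ifs <;> norm_num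
  have hsmul : ∀ (c : K) (v : V), |N (c • v)| ≤ |N v| := by
    intro c v
    rw [hN.1 c v, abs_mul]
    calc |sgn c| * |N v| ≤ 1 * |N v| := by
          exact mul_le_mul_of_nonneg_right (hsgn c) (abs_nonneg _)
      _ = |N v| := one_mul _
  have habs : ∀ v w : V, |N (v + w)| ≤ max |N v| |N w| := by
    intro v w
    rw [abs_le]
    constructor
    · calc -(max |N v| |N w|) = min (-|N v|) (-|N w|) := by rw [min_neg_neg]
        _ ≤ min (N v) (N w) := min_le_min (neg_abs_le _) (neg_abs_le _)
        _ ≤ N (v + w) := (hN.2 v w).1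
    · calc N (v + w) ≤ max (N v) (N w) := (hN.2 v w).2
        _ ≤ max |N v| |N w| := max_le_max (le_abs_self _) (le_abs_self _)
  set W : ℝ → Submodule K V := fun a =>
    { carrier := {v | |N v| ≤ max a 0}
      add_mem' := fun {x y} hx hy => le_trans (habs x y) (max_le hx hy)
      zero_mem' := by simp [hzero]
      smul_mem' := fun c v hv => le_trans (hsmul c v) hv } with hW
  have hmemW : ∀ (a : ℝ) (v : V), v ∈ W a ↔ |N v| ≤ max a 0 := fun a v => Iff.rfl
  have key : ∀ x y : V, |N x| < |N y| →
      Module.finrank K (W |N x|) < Module.finrank K (W |N y|) := by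
    intro x y hxy
    apply Submodule.finrank_lt_finrank_of_lt
    rw [SetLike.lt_iff_le_and_exists]
    constructor
    · intro v hv
      rw [hmemW] at hv ⊢
      exact hv.trans (max_le_max hxy.le le_rfl)
    · refine ⟨y, ?_, ?_⟩
      · rw [hmemW]
        exact le_max_left _ _
      · rw [hmemW]
        rw [max_eq_left (abs_nonneg (N x))]
        exact not_le.mpr hxy
  have hA : (Set.range fun v => |N v|).Finite := by
    apply Set.Finite.of_finite_image (f := fun a => Module.finrank K (W a))
    · apply Set.Finite.subset (Set.finite_Iic (Module.finrank K V))
      rintro _ ⟨a, -, rfl⟩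
      exact Submodule.finrank_le _
    · rintro a ⟨v, rfl⟩ b ⟨w, rfl⟩ hab
      rcases lt_trichotomy (|N v|) (|N w|) with h | h | h
      · exact absurd hab (ne_of_lt (key v w h))
      · exact h
      · exact absurd hab.symm (ne_of_lt (key w v h))
  have hsub : Set.range N ⊆ (Set.range fun v => |N v|) ∪
      (Neg.neg '' Set.range fun v => |N v|) := by
    rintro _ ⟨v, rfl⟩
    rcases le_or_gt 0 (N v) with h | h
    · left
      exact ⟨v, abs_of_nonneg h⟩
    · right
      exact ⟨|N v|, ⟨v, rfl⟩, by rw [abs_of_neg h]; ring⟩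
  exact Set.Finite.subset (hA.union (hA.image _)) hsub
end
end

section
/- In ℝ^n equipped with a signed seminorm ||·||^sgn with maximal value a = max_v ||v||^sgn > 0, the set A = {v : ||v||^sgn = a} is a convex cone, and there exists a linear functional w ∈ (ℝ^n)^* such that the interior of A equals {v : ⟨v,w⟩ > 0}, the closure of A equals {v : ⟨v,w⟩ ≥ 0}, and the boundary of A equals the hyperplane w^⊥. -/
noncomputable section

variable {K : Type*} [Field K] [LinearOrder K] [IsStrictOrderedRing K] {V : Type*} [AddCommGroup V] [Module K V]

set_option maxHeartbeats 1000000 in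
/-- In `ℝⁿ` with a signed seminorm of positive maximal value `a`, the level set
`A = {v : ‖v‖ = a}` is a convex cone, and its interior/closure/boundary are the
open/closed half-space and the hyperplane of a linear functional `w`. -/
theorem signedSeminorm_max_level_set
    {n : ℕ} (N : (Fin n → ℝ) → ℝ) (hN : IsSignedSeminormTriv (K := ℝ) N)
    (a : ℝ) (ha : 0 < a) (hub : ∀ v, N v ≤ a) (hatt : ∃ v, N v = a) :
    Convex ℝ {v : Fin n → ℝ | N v = a} ∧
    (∀ t : ℝ, 0 < t → ∀ v ∈ {v : Fin n → ℝ | N v = a}, t • v ∈ {v : Fin n → ℝ | N v = a}) ∧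
    ∃ w : (Fin n → ℝ) →ₗ[ℝ] ℝ,
      interior {v : Fin n → ℝ | N v = a} = {v | 0 < w v} ∧
      closure {v : Fin n → ℝ | N v = a} = {v | 0 ≤ w v} ∧
      frontier {v : Fin n → ℝ | N v = a} = {v | w v = 0} := by
  obtain ⟨hsmul, hadd⟩ := hN
  set A : Set (Fin n → ℝ) := {v : Fin n → ℝ | N v = a} with hA
  set negA : Set (Fin n → ℝ) := {v : Fin n → ℝ | N v = -a} with hnegA
  -- basic facts about N
  have hneg : ∀ v : Fin n → ℝ, N (-v) = -N v := by
    intro v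
    have := hsmul (-1) v
    simp only [neg_smul, one_smul, sgn] at this
    norm_num at this
    simpa using this
  have hlb : ∀ v : Fin n → ℝ, -a ≤ N v := by
    intro v
    have := hub (-v)
    rw [hneg] at this
    linarith
  have hpos_smul : ∀ (t : ℝ), 0 < t → ∀ v : Fin n → ℝ, N (t • v) = N v := by
    intro t ht v
    rw [hsmul t v]
    simp [sgn, ht, one_mul]
  -- cone property for A and negA
  have hconeA : ∀ t : ℝ, 0 < t → ∀ v ∈ A, t • v ∈ A := by
    intro t ht v hv
    simp only [hA, Set.mem_setOf_eq] at *
    rw [hpos_smul t ht v, hv]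
  have hconeNegA : ∀ t : ℝ, 0 < t → ∀ v ∈ negA, t • v ∈ negA := by
    intro t ht v hv
    simp only [hnegA, Set.mem_setOf_eq] at *
    rw [hpos_smul t ht v, hv]
  -- convexity of A and negA
  have hconv : ∀ b : ℝ, Convex ℝ {v : Fin n → ℝ | N v = b} := by
    intro b
    intro x hx y hy s t hs ht hst
    simp only [Set.mem_setOf_eq] at *
    rcases eq_or_lt_of_le hs with hs0 | hs0
    · have ht1 : t = 1 := by linarith
      subst ht1
      simp [← hs0, hy]
    rcases eq_or_lt_of_le ht with ht0 | ht0
    · have hs1 : s = 1 := by linarith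
      subst hs1
      simp [← ht0, hx]
    have h1 : N (s • x) = b := by rw [hpos_smul s hs0, hx]
    have h2 : N (t • y) = b := by rw [hpos_smul t ht0, hy]
    have := hadd (s • x) (t • y)
    rw [h1, h2] at this
    simp only [min_self, max_self] at this
    linarith [this.1, this.2]
  have hconvA : Convex ℝ A := hconv a
  have hconvNegA : Convex ℝ negA := hconv (-a)
  refine ⟨hconvA, hconeA, ?_⟩
  obtain ⟨v₀, hv₀⟩ := hatt
  have hv₀A : v₀ ∈ A := hv₀
  have hnegv₀ : -v₀ ∈ negA := by
    simp only [hnegA, Set.mem_setOf_eq, hneg, hv₀]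
  -- the subspace B
  have hzero : N 0 = 0 := by
    have := hsmul 0 0
    simp [sgn] at this
    simpa using this
  set B : Submodule ℝ (Fin n → ℝ) :=
    { carrier := {v : Fin n → ℝ | -a < N v ∧ N v < a}
      add_mem' := by
        intro x y hx hy
        simp only [Set.mem_setOf_eq] at *
        have := hadd x y
        constructor
        · have : min (N x) (N y) ≤ N (x + y) := this.1
          rcases min_le_iff.mp (le_refl (min (N x) (N y))) with h | h <;>
            [skip; skip] <;> cases le_total (N x) (N y) with
          | inl hc => rw [min_eq_left hc] at this; linarith
          | inr hc => rw [min_eq_right hc] at this; linarith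
        · have h2 : N (x + y) ≤ max (N x) (N y) := this.2
          cases le_total (N x) (N y) with
          | inl hc => rw [max_eq_right hc] at h2; linarith
          | inr hc => rw [max_eq_left hc] at h2; linarith
      zero_mem' := by
        simp only [Set.mem_setOf_eq, hzero]
        constructor <;> linarith
      smul_mem' := by
        intro c x hx
        simp only [Set.mem_setOf_eq] at *
        rw [hsmul c x]
        rcases lt_trichotomy c 0 with hc | hc | hc
        · simp only [sgn, if_neg (not_lt.mpr hc.le), if_pos hc]
          constructor <;> nlinarith [hx.1, hx.2]
        · subst hc
          have hs0 : sgn (0:ℝ) * N x = 0 := by simp [sgn]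
          rw [hs0]
          exact ⟨by linarith, ha⟩
        · simp only [sgn, if_pos hc]
          constructor <;> nlinarith [hx.1, hx.2] } with hB
  have hBmem : ∀ v : Fin n → ℝ, v ∈ B ↔ -a < N v ∧ N v < a := fun v => Iff.rfl
  -- A + B ⊆ A
  have hAB : ∀ v ∈ A, ∀ u ∈ B, v + u ∈ A := by
    intro v hv u hu
    simp only [hA, Set.mem_setOf_eq] at hv ⊢
    rw [hBmem] at hu
    by_contra hne
    have h1 : N (v + u) < a := lt_of_le_of_ne (hub _) hne
    have h2 : N (-u) < a := by rw [hneg]; linarith [hu.1]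
    have := (hadd (v + u) (-u)).2
    simp only [add_neg_cancel_right] at this
    have : N v < a := lt_of_le_of_lt this (max_lt h1 h2)
    linarith [hv, this]
  -- trichotomy
  have htri : ∀ v : Fin n → ℝ, v ∈ A ∨ v ∈ B ∨ v ∈ negA := by
    intro v
    rcases eq_or_lt_of_le (hub v) with h | h
    · exact Or.inl h
    rcases eq_or_lt_of_le (hlb v) with h2 | h2
    · exact Or.inr (Or.inr h2.symm)
    · exact Or.inr (Or.inl ((hBmem v).mpr ⟨h2, h⟩))
  -- disjointness
  have hdisj : Disjoint A negA := by
    rw [Set.disjoint_left]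
    intro v hv hv'
    simp only [hA, hnegA, Set.mem_setOf_eq] at hv hv'
    rw [hv] at hv'
    linarith
  -- negA = -A
  have hnegA_eq : negA = -A := by
    ext v
    simp only [Set.mem_neg, hA, hnegA, Set.mem_setOf_eq, hneg]
    constructor <;> intro h <;> linarith
  -- interior of A is nonempty
  have hBne : (B : Set (Fin n → ℝ)) ≠ Set.univ := by
    intro h
    have : v₀ ∈ B := by rw [← SetLike.mem_coe, h]; trivial
    rw [hBmem] at this
    linarith [this.2, hv₀]
  have hintA : (interior A).Nonempty := by
    by_contra hempty
    rw [Set.not_nonempty_iff_eq_empty] at hempty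
    have hintNegA : interior negA = ∅ := by
      have hpre : negA = (Homeomorph.neg (Fin n → ℝ)) ⁻¹' A := by
        rw [hnegA_eq]
        rfl
      rw [hpre, ← Homeomorph.preimage_interior, hempty, Set.preimage_empty]
    have hμA : MeasureTheory.volume A = 0 := by
      have h1 : A ⊆ frontier A := by
        rw [frontier, hempty, Set.diff_empty]
        exact subset_closure
      exact MeasureTheory.measure_mono_null h1 (hconvA.addHaar_frontier _)
    have hμnegA : MeasureTheory.volume negA = 0 := by
      have h1 : negA ⊆ frontier negA := by
        rw [frontier, hintNegA, Set.diff_empty]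
        exact subset_closure
      exact MeasureTheory.measure_mono_null h1 (hconvNegA.addHaar_frontier _)
    have hμB : MeasureTheory.volume (B : Set (Fin n → ℝ)) = 0 := by
      apply MeasureTheory.Measure.addHaar_submodule
      intro h
      exact hBne (by rw [h]; simp)
    have huniv : (Set.univ : Set (Fin n → ℝ)) ⊆ A ∪ ((B : Set (Fin n → ℝ)) ∪ negA) := by
      intro v _
      rcases htri v with h | h | h
      · exact Or.inl h
      · exact Or.inr (Or.inl h)
      · exact Or.inr (Or.inr h)
    have hle : MeasureTheory.volume (Set.univ : Set (Fin n → ℝ)) = 0 :=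
      MeasureTheory.measure_mono_null huniv
        (MeasureTheory.measure_union_null hμA
          (MeasureTheory.measure_union_null hμB hμnegA))
    exact absurd hle
      (ne_of_gt (isOpen_univ.measure_pos MeasureTheory.volume Set.univ_nonempty))
  -- Hahn-Banach separation
  obtain ⟨f, u, hf1, hf2⟩ := geometric_hahn_banach_open (hconvA.interior) isOpen_interior
    hconvNegA (Set.disjoint_left.mpr fun x hx hx' =>
      Set.disjoint_left.mp hdisj (interior_subset hx) hx')
  set w : (Fin n → ℝ) →ₗ[ℝ] ℝ := -(f : (Fin n → ℝ) →ₗ[ℝ] ℝ) with hw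
  have hwv : ∀ v : Fin n → ℝ, w v = -(f v) := fun v => rfl
  have hwcont : Continuous fun v : Fin n → ℝ => w v := by
    simp only [hwv]
    exact f.continuous.neg
  set c : ℝ := -u with hc
  have hw1 : ∀ x ∈ interior A, c < w x := by
    intro x hx
    have := hf1 x hx
    simp only [hwv, hc]
    linarith
  have hw2 : ∀ y ∈ negA, w y ≤ c := by
    intro y hy
    have := hf2 y hy
    simp only [hwv, hc]
    linarith
  -- w ≤ 0 on negA
  have hwnegA : ∀ y ∈ negA, w y ≤ 0 := by
    intro y hy
    by_contra hpos
    push_neg at hpos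
    have ht : (0:ℝ) < (|c| + 1) / w y := div_pos (by positivity) hpos
    have := hw2 _ (hconeNegA _ ht y hy)
    rw [map_smul, smul_eq_mul, div_mul_cancel₀ _ (ne_of_gt hpos)] at this
    have : c ≤ |c| := le_abs_self c
    linarith [le_abs_self c, hw2 _ (hconeNegA _ ht y hy), map_smul w ((|c|+1)/w y) y]
  -- w ≥ 0 on A
  have hwA : ∀ v ∈ A, 0 ≤ w v := by
    intro v hv
    have hv' : -v ∈ negA := by
      simp only [hA, Set.mem_setOf_eq] at hv
      simp only [hnegA, Set.mem_setOf_eq, hneg, hv]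
    have := hwnegA _ hv'
    rw [map_neg] at this
    linarith
  -- w = 0 on B
  have hwB : ∀ u' ∈ B, w u' = 0 := by
    intro u' hu'
    by_contra hne
    have key : ∀ t : ℝ, 0 ≤ w v₀ + t * w u' := by
      intro t
      have htu : t • u' ∈ B := B.smul_mem t hu'
      have := hwA _ (hAB v₀ hv₀A _ htu)
      rw [map_add, map_smul, smul_eq_mul] at this
      linarith
    have := key (-(w v₀ + 1) / w u')
    rw [div_mul_cancel₀ _ hne] at this
    linarith
  -- a vector e with w e = 1
  obtain ⟨x₀, hx₀⟩ := hintA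
  have hd : 0 < w x₀ - w (-v₀) := by
    have h1 := hw1 x₀ hx₀
    have h2 := hw2 _ hnegv₀
    linarith
  set e : Fin n → ℝ := (w x₀ - w (-v₀))⁻¹ • (x₀ - -v₀) with he
  have hwe : w e = 1 := by
    rw [he, map_smul, map_sub, smul_eq_mul]
    exact inv_mul_cancel₀ (ne_of_gt hd)
  -- sandwich: {w > 0} ⊆ A ⊆ {w ≥ 0}
  have hsub1 : ∀ x : Fin n → ℝ, 0 < w x → x ∈ A := by
    intro x hx
    rcases htri x with h | h | h
    · exact h
    · rw [hwB x h] at hx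
      exact absurd hx (lt_irrefl 0)
    · exact absurd hx (not_lt.mpr (hwnegA x h))
  have hopen : IsOpen {v : Fin n → ℝ | 0 < w v} := isOpen_lt continuous_const hwcont
  have hclosed : IsClosed {v : Fin n → ℝ | 0 ≤ w v} := isClosed_le continuous_const hwcont
  have hint_eq : interior A = {v : Fin n → ℝ | 0 < w v} := by
    apply Set.Subset.antisymm
    · intro x hx
      have hxA := interior_subset hx
      have h0 : 0 ≤ w x := hwA x hxA
      rcases eq_or_lt_of_le h0 with h0 | h0
      · exfalso
        have hmem : A ∈ nhds x := mem_interior_iff_mem_nhds.mp hx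
        have hcont : Continuous fun δ : ℝ => x - δ • e := continuous_const.sub (continuous_id.smul continuous_const)
        have h1 : Filter.Tendsto (fun δ : ℝ => x - δ • e) (nhds 0) (nhds x) := by
          have := hcont.tendsto 0
          simpa using this
        have h2 : ∀ᶠ δ : ℝ in nhds 0, x - δ • e ∈ A := h1.eventually_mem hmem
        obtain ⟨δ, hδA, hδpos⟩ :=
          ((h2.filter_mono (nhdsWithin_le_nhds :
            nhdsWithin (0:ℝ) (Set.Ioi 0) ≤ nhds 0)).and self_mem_nhdsWithin).exists
        have h3 := hwA _ hδA
        rw [map_sub, map_smul, smul_eq_mul, hwe] at h3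
        have hδ' : (0:ℝ) < δ := hδpos
        linarith
      · exact h0
    · exact interior_maximal (fun x hx => hsub1 x hx) hopen
  have hclo_eq : closure A = {v : Fin n → ℝ | 0 ≤ w v} := by
    apply Set.Subset.antisymm
    · exact closure_minimal (fun x hx => hwA x hx) hclosed
    · intro x hx
      simp only [Set.mem_setOf_eq] at hx
      have hcont : Continuous fun δ : ℝ => x + δ • e := continuous_const.add (continuous_id.smul continuous_const)
      have h1 : Filter.Tendsto (fun δ : ℝ => x + δ • e) (nhdsWithin 0 (Set.Ioi 0)) (nhds x) := by
        have := (hcont.tendsto 0).mono_left (nhdsWithin_le_nhds :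
          nhdsWithin (0:ℝ) (Set.Ioi 0) ≤ nhds 0)
        simpa using this
      refine mem_closure_of_tendsto h1 ?_
      filter_upwards [self_mem_nhdsWithin] with δ hδ
      refine hsub1 _ ?_
      rw [map_add, map_smul, smul_eq_mul, hwe]
      have hδ' : (0:ℝ) < δ := hδ
      linarith
  refine ⟨w, hint_eq, hclo_eq, ?_⟩
  rw [frontier, hint_eq, hclo_eq]
  ext x
  simp only [Set.mem_diff, Set.mem_setOf_eq, not_lt]
  constructor
  · rintro ⟨h1, h2⟩
    linarith
  · intro h
    exact ⟨le_of_eq h.symm, le_of_eq h⟩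
end
end

section
/- A map X : (ℝ^{n+1})^* → {0,+1,−1} is the sign of a signed seminorm on (ℝ^{n+1})^* (over ℝ with trivial absolute value) if and only if X^+ = X^{-1}(+1) and X^− = X^{-1}(−1) are strictly convex cones not containing 0, and X^0 = X^{-1}(0) is a nonempty linear subspace. -/
noncomputable section

variable {K : Type*} [Field K] [LinearOrder K] [IsStrictOrderedRing K] {V : Type*} [AddCommGroup V] [Module K V]

/-- A strictly convex cone not containing `0`. -/
def IsStrictConvexCone {W : Type*} [AddCommGroup W] [Module ℝ W] (C : Set W) : Prop :=
  Convex ℝ C ∧ (∀ t : ℝ, 0 < t → ∀ v ∈ C, t • v ∈ C) ∧ (0 : W) ∉ C ∧ ∀ v ∈ C, -v ∉ C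

private lemma sgn_pos' {x : ℝ} (h : 0 < x) : sgn x = 1 := by simp [sgn, h]
private lemma sgn_neg' {x : ℝ} (h : x < 0) : sgn x = -1 := by simp [sgn, h, asymm h]

/-- A `{0,±1}`-valued map on `(ℝ^{n+1})^*` is (the sign of) a signed seminorm iff
its positive and negative parts are strictly convex cones without `0` and its
zero set is a (nonempty) linear subspace. -/
theorem sign_of_signedSeminorm_iff {n : ℕ}
    (X : Module.Dual ℝ (Fin (n + 1) → ℝ) → ℝ)
    (hval : ∀ e, X e = 0 ∨ X e = 1 ∨ X e = -1) :
    IsSignedSeminormTriv (K := ℝ) X ↔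
      (IsStrictConvexCone {e | X e = 1} ∧ IsStrictConvexCone {e | X e = -1} ∧
        ∃ W : Submodule ℝ (Module.Dual ℝ (Fin (n + 1) → ℝ)), (W : Set _) = {e | X e = 0}) := by
  constructor
  · rintro ⟨hsmul, hadd⟩
    have hX0 : X 0 = 0 := by
      have := hsmul 0 0
      simpa [sgn] using this
    have hneg : ∀ e, X (-e) = -X e := by
      intro e
      have := hsmul (-1) e
      rw [sgn_neg' (by norm_num)] at this
      simpa using this
    have hsum : ∀ (a : ℝ) (v w), X v = a → X w = a → X (v + w) = a := by
      intro a v w hv hw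
      have h := hadd v w
      rw [hv, hw, min_self, max_self] at h
      exact le_antisymm h.2 h.1
    refine ⟨⟨?_, ?_, ?_, ?_⟩, ⟨?_, ?_, ?_, ?_⟩, ?_⟩
    · -- convexity of positive part
      intro v hv w hw a b ha hb hab
      rcases eq_or_lt_of_le ha with ha0 | ha0
      · have hb1 : b = 1 := by linarith
        simpa [← ha0, hb1] using hw
      rcases eq_or_lt_of_le hb with hb0 | hb0
      · have ha1 : a = 1 := by linarith
        simpa [← hb0, ha1] using hv
      have h1 : X (a • v) = 1 := by rw [hsmul, sgn_pos' ha0, hv, one_mul]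
      have h2 : X (b • w) = 1 := by rw [hsmul, sgn_pos' hb0, hw, one_mul]
      exact hsum 1 _ _ h1 h2
    · intro t ht v hv
      show X (t • v) = 1
      rw [hsmul, sgn_pos' ht, hv, one_mul]
    · simp [Set.mem_setOf_eq, hX0]
    · intro v hv h
      have : X (-v) = -X v := hneg v
      rw [h, hv] at this
      norm_num at this
    · -- convexity of negative part
      intro v hv w hw a b ha hb hab
      rcases eq_or_lt_of_le ha with ha0 | ha0
      · have hb1 : b = 1 := by linarith
        simpa [← ha0, hb1] using hw
      rcases eq_or_lt_of_le hb with hb0 | hb0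
      · have ha1 : a = 1 := by linarith
        simpa [← hb0, ha1] using hv
      have h1 : X (a • v) = -1 := by rw [hsmul, sgn_pos' ha0, hv, one_mul]
      have h2 : X (b • w) = -1 := by rw [hsmul, sgn_pos' hb0, hw, one_mul]
      exact hsum (-1) _ _ h1 h2
    · intro t ht v hv
      show X (t • v) = -1
      rw [hsmul, sgn_pos' ht, hv, one_mul]
    · simp [Set.mem_setOf_eq, hX0]
    · intro v hv h
      have : X (-v) = -X v := hneg v
      rw [h, hv] at this
      norm_num at this
    · exact ⟨
        { carrier := setOf (fun e => X e = 0)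
          add_mem' := fun hv hw => hsum 0 _ _ hv hw
          zero_mem' := hX0
          smul_mem' := by
            intro c v hv
            show X (c • v) = 0
            rw [hsmul, hv, mul_zero] }, rfl⟩
  · rintro ⟨⟨hPc, hPs, hP0, hPn⟩, ⟨hNc, hNs, hN0, hNn⟩, W, hW⟩
    have hmem : ∀ e, e ∈ W ↔ X e = 0 := fun e => by
      constructor
      · intro h; have : e ∈ (W : Set _) := h; rw [hW] at this; exact this
      · intro h; have : e ∈ (W : Set _) := by rw [hW]; exact h
        exact this
    have hX0 : X 0 = 0 := (hmem 0).1 W.zero_mem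
    have hneg : ∀ e, X (-e) = -X e := by
      intro e
      rcases hval e with h | h | h
      · rw [h, neg_zero]
        exact (hmem _).1 (W.neg_mem ((hmem e).2 h))
      · rw [h]
        rcases hval (-e) with h' | h' | h'
        · exfalso
          have : e ∈ W := by
            have := W.neg_mem ((hmem _).2 h')
            simpa using this
          rw [(hmem e).1 this] at h; norm_num at h
        · exact absurd h' (hPn e h)
        · rw [h']
      · rw [h]
        rcases hval (-e) with h' | h' | h'
        · exfalso
          have : e ∈ W := by
            have := W.neg_mem ((hmem _).2 h')
            simpa using this
          rw [(hmem e).1 this] at h; norm_num at h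
        · rw [h']; norm_num
        · exact absurd h' (hNn e h)
    have hsmul : ∀ (c : ℝ) (v), X (c • v) = sgn c * X v := by
      intro c v
      rcases lt_trichotomy c 0 with hc | hc | hc
      · rw [sgn_neg' hc]
        have h1 : c • v = -((-c) • v) := by module
        rw [h1, hneg]
        have h2 : X ((-c) • v) = X v := by
          rcases hval v with h | h | h
          · rw [h, (hmem _).1 (W.smul_mem (-c) ((hmem v).2 h))]
          · rw [h]; exact hPs (-c) (by linarith) v h
          · rw [h]; exact hNs (-c) (by linarith) v h
        rw [h2]; ring
      · subst hc; simp [sgn, hX0]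
      · rw [sgn_pos' hc, one_mul]
        rcases hval v with h | h | h
        · rw [h, (hmem _).1 (W.smul_mem c ((hmem v).2 h))]
        · rw [h]; exact hPs c hc v h
        · rw [h]; exact hNs c hc v h
    refine ⟨hsmul, ?_⟩
    -- helpers
    have hsum_pos : ∀ v w, X v = 1 → X w = 1 → X (v + w) = 1 := by
      intro v w hv hw
      have hm : X ((1/2 : ℝ) • v + (1/2 : ℝ) • w) = 1 :=
        hPc hv hw (by norm_num) (by norm_num) (by norm_num)
      have : v + w = (2 : ℝ) • ((1/2 : ℝ) • v + (1/2 : ℝ) • w) := by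
        rw [smul_add, smul_smul, smul_smul]; norm_num
      rw [this, hsmul, sgn_pos' (by norm_num : (0:ℝ) < 2), hm, mul_one]
    have hsum_neg : ∀ v w, X v = -1 → X w = -1 → X (v + w) = -1 := by
      intro v w hv hw
      have hm : X ((1/2 : ℝ) • v + (1/2 : ℝ) • w) = -1 :=
        hNc hv hw (by norm_num) (by norm_num) (by norm_num)
      have : v + w = (2 : ℝ) • ((1/2 : ℝ) • v + (1/2 : ℝ) • w) := by
        rw [smul_add, smul_smul, smul_smul]; norm_num
      rw [this, hsmul, sgn_pos' (by norm_num : (0:ℝ) < 2), hm]; norm_num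
    have hsum_zero : ∀ v w, X v = 0 → X w = 0 → X (v + w) = 0 := by
      intro v w hv hw
      exact (hmem _).1 (W.add_mem ((hmem v).2 hv) ((hmem w).2 hw))
    have hpz : ∀ v w, X v = 1 → X w = 0 → X (v + w) ≠ -1 := by
      intro v w hv hw hc
      have h1 : X (-(v + w)) = 1 := by rw [hneg, hc]; norm_num
      have hm : X ((1/2 : ℝ) • v + (1/2 : ℝ) • (-(v + w))) = 1 :=
        hPc hv h1 (by norm_num) (by norm_num) (by norm_num)
      have he : (1/2 : ℝ) • v + (1/2 : ℝ) • (-(v + w)) = (-(1/2) : ℝ) • w := by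
        module
      rw [he, hsmul, sgn_neg' (by norm_num : (-(1/2) : ℝ) < 0), hw] at hm
      norm_num at hm
    have hnz : ∀ v w, X v = -1 → X w = 0 → X (v + w) ≠ 1 := by
      intro v w hv hw hc
      have h1 : X (-v) = 1 := by rw [hneg, hv]; norm_num
      have hm : X ((1/2 : ℝ) • (-v) + (1/2 : ℝ) • (v + w)) = 1 :=
        hPc h1 hc (by norm_num) (by norm_num) (by norm_num)
      have he : (1/2 : ℝ) • (-v) + (1/2 : ℝ) • (v + w) = ((1/2) : ℝ) • w := by
        module
      rw [he, hsmul, sgn_pos' (by norm_num : (0:ℝ) < 1/2), hw] at hm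
      norm_num at hm
    intro v w
    have hb : ∀ e, -1 ≤ X e ∧ X e ≤ 1 := by
      intro e; rcases hval e with h | h | h <;> rw [h] <;> norm_num
    rcases hval v with hv | hv | hv <;> rcases hval w with hw | hw | hw
    · rw [hv, hw, hsum_zero v w hv hw]; norm_num
    · -- v = 0, w = 1 : X(v+w) ≠ -1
      have hne : X (v + w) ≠ -1 := by
        rw [add_comm]; exact hpz w v hw hv
      rcases hval (v + w) with h | h | h
      · rw [hv, hw, h]; norm_num
      · rw [hv, hw, h]; norm_num
      · exact absurd h hne
    · have hne : X (v + w) ≠ 1 := by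
        rw [add_comm]; exact hnz w v hw hv
      rcases hval (v + w) with h | h | h
      · rw [hv, hw, h]; norm_num
      · exact absurd h hne
      · rw [hv, hw, h]; norm_num
    · have hne : X (v + w) ≠ -1 := hpz v w hv hw
      rcases hval (v + w) with h | h | h
      · rw [hv, hw, h]; norm_num
      · rw [hv, hw, h]; norm_num
      · exact absurd h hne
    · rw [hv, hw, hsum_pos v w hv hw]; norm_num
    · rw [hv, hw]
      refine ⟨?_, ?_⟩
      · calc min (1:ℝ) (-1) = -1 := by norm_num
          _ ≤ X (v + w) := (hb _).1
      · calc X (v + w) ≤ 1 := (hb _).2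
          _ = max 1 (-1) := by norm_num
    · have hne : X (v + w) ≠ 1 := hnz v w hv hw
      rcases hval (v + w) with h | h | h
      · rw [hv, hw, h]; norm_num
      · exact absurd h hne
      · rw [hv, hw, h]; norm_num
    · rw [hv, hw]
      refine ⟨?_, ?_⟩
      · calc min (-1:ℝ) 1 = -1 := by norm_num
          _ ≤ X (v + w) := (hb _).1
      · calc X (v + w) ≤ 1 := (hb _).2
          _ = max (-1) 1 := by norm_num
    · rw [hv, hw, hsum_neg v w hv hw]; norm_num
end
end

section
/- If ||·||^sgn is a signed seminorm on (K^{n+1})^* and λ_0,…,λ_m ∈ K satisfy Σ_i λ_i f_i = 0 for functionals f_0,…,f_m ∈ (K^{n+1})^* with not all λ_i ||f_i||^sgn zero, then there exist distinct indices i ≠ j such that |λ_i|·| ||f_i||^sgn | = |λ_j|·| ||f_j||^sgn | = max_e |λ_e|·| ||f_e||^sgn | and sgn(λ_i)||f_i||^sgn · |λ_i| = − sgn(λ_j)||f_j||^sgn · |λ_j|. -/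
noncomputable section

variable {K : Type*} [Field K] [LinearOrder K] [IsStrictOrderedRing K] {V : Type*} [AddCommGroup V] [Module K V]

lemma abs_sgn_mul_av (av : AbsoluteValue K ℝ) (c : K) : |sgn c * av c| = av c := by
  unfold sgn
  rcases lt_trichotomy (0:K) c with h|h|h
  · simp [h, abs_of_nonneg (av.nonneg c)]
  · simp [← h]
  · simp [h, not_lt.2 h.le, abs_of_nonneg (av.nonneg c)]

lemma seminorm_sum_bounds {av : AbsoluteValue K ℝ} {N : V → ℝ} (hN : IsSignedSeminorm av N)
    {ι : Type*} (g : ι → V) (s : Finset ι) (hs : s.Nonempty) :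
    s.inf' hs (fun e => N (g e)) ≤ N (∑ e ∈ s, g e) ∧
      N (∑ e ∈ s, g e) ≤ s.sup' hs (fun e => N (g e)) := by
  induction hs using Finset.Nonempty.cons_induction with
  | singleton a => simp
  | cons a s h hs ih =>
    rw [Finset.sum_cons]
    constructor
    · refine le_trans ?_ (hN.2 (g a) (∑ e ∈ s, g e)).1
      rw [Finset.inf'_cons hs]
      exact min_le_min le_rfl ih.1
    · refine le_trans (hN.2 (g a) (∑ e ∈ s, g e)).2 ?_
      rw [Finset.sup'_cons hs]
      exact max_le_max le_rfl ih.2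

/-- If `Σ λᵢ fᵢ = 0` is a linear relation among functionals whose signed
tropicalization is not identically zero, then the maximum of `|λₑ|·|‖fₑ‖|` is
attained at two indices with opposite signs. -/
theorem signedSeminorm_real_tropical_hyperplane {n m : ℕ}
    (hK : IsRealClosed' K) (av : AbsoluteValue K ℝ) (hna : IsNonarch av) (hcomp : Compat av)
    (N : Module.Dual K (Fin (n + 1) → K) → ℝ) (hN : IsSignedSeminorm av N)
    (lam : Fin (m + 1) → K) (f : Fin (m + 1) → Module.Dual K (Fin (n + 1) → K))
    (hrel : ∑ i, lam i • f i = 0)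
    (hnz : ∃ i, av (lam i) * |N (f i)| ≠ 0) :
    ∃ i j : Fin (m + 1), i ≠ j ∧
      (∀ e, av (lam e) * |N (f e)| ≤ av (lam i) * |N (f i)|) ∧
      av (lam i) * |N (f i)| = av (lam j) * |N (f j)| ∧
      sgn (lam i) * av (lam i) * N (f i) = -(sgn (lam j) * av (lam j) * N (f j)) := by
  obtain ⟨hsmul, hadd⟩ := hN
  have hN0 : N 0 = 0 := by
    have := hsmul 0 0
    simpa [sgn, smul_zero] using this
  set t : Fin (m + 1) → ℝ := fun e => N (lam e • f e) with ht
  have hte : ∀ e, t e = sgn (lam e) * av (lam e) * N (f e) := fun e => hsmul _ _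
  have habs : ∀ e, |t e| = av (lam e) * |N (f e)| := by
    intro e
    rw [hte, abs_mul, abs_sgn_mul_av]
  -- rule out m = 0
  match m, lam, f, hrel, hnz, t, ht, hte, habs with
  | 0, lam, f, hrel, hnz, t, ht, hte, habs =>
    exfalso
    obtain ⟨e, he⟩ := hnz
    have he0 : e = 0 := Fin.ext (by omega)
    rw [Fin.sum_univ_one] at hrel
    have : t 0 = 0 := by rw [ht]; simp only [hrel, hN0]
    rw [he0, ← habs, this] at he
    simp at he
  | (m + 1), lam, f, hrel, hnz, t, ht, hte, habs =>
    have hNseminorm : IsSignedSeminorm av N := ⟨hsmul, hadd⟩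
    obtain ⟨i, hi⟩ := Finite.exists_max t
    obtain ⟨j, hj⟩ := Finite.exists_min t
    have hNneg : ∀ v, N (-v) = -N v := by
      intro v
      have := hsmul (-1) v
      simpa [sgn, neg_one_smul, show ¬(0:K) < -1 by norm_num, show (-1:K) < 0 by norm_num] using this
    -- erase lemmas
    have key : ∀ k : Fin (m + 1 + 1), N (∑ e ∈ Finset.univ.erase k, lam e • f e) = -t k := by
      intro k
      have hsum : (∑ e ∈ Finset.univ.erase k, lam e • f e) = -(lam k • f k) := by
        have := Finset.add_sum_erase Finset.univ (fun e => lam e • f e) (Finset.mem_univ k)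
        rw [hrel] at this
        linear_combination (norm := abel) this
      simp [hsum, hNneg, ht]
    have hne : ∀ k : Fin (m + 1 + 1), (Finset.univ.erase k).Nonempty := by
      intro k
      exact (Finset.erase_nonempty (Finset.mem_univ k)).2 Finset.univ_nontrivial
    have h1 : t j ≤ -t i := by
      have hb := (seminorm_sum_bounds hNseminorm (fun e => lam e • f e) _ (hne i)).1
      rw [key i] at hb
      refine le_trans ?_ hb
      exact Finset.le_inf' _ _ fun e _ => by simpa [ht] using hj e
    have h2 : -t j ≤ t i := by
      have hb := (seminorm_sum_bounds hNseminorm (fun e => lam e • f e) _ (hne j)).2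
      rw [key j] at hb
      refine le_trans hb ?_
      exact Finset.sup'_le _ _ fun e _ => by simpa [ht] using hi e
    have heq : t i = -t j := le_antisymm (by linarith) h2
    have hM : ∀ e, |t e| ≤ t i := by
      intro e
      rw [abs_le]
      exact ⟨by rw [heq]; linarith [hj e], hi e⟩
    have hpos : 0 < t i := by
      obtain ⟨e, he⟩ := hnz
      rw [← habs] at he
      have : 0 < |t e| := lt_of_le_of_ne (abs_nonneg _) (Ne.symm he)
      exact lt_of_lt_of_le this (hM e)
    have hij : i ≠ j := by
      intro h
      rw [h] at heq
      linarith
    refine ⟨i, j, hij, ?_, ?_, ?_⟩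
    · intro e
      rw [← habs, ← habs, abs_of_pos hpos]
      exact hM e
    · rw [← habs, ← habs, abs_of_pos hpos, heq, abs_of_neg (show t j < 0 by linarith)]
    · rw [← hte, ← hte, heq]
end
end

section
/- The map from signed seminorms to the lattice of flats given by X ↦ X^0 (the zero set of a covector of an oriented matroid of rank n) is well-defined (the zero set of any covector is a flat of the underlying matroid), surjective onto the flats, and strictly monotonic: if X < Y are covectors then X^0 ⊋ Y^0; consequently every chain of nonzero covectors has length at most n. -/
set_option linter.unusedSectionVars false
set_option linter.unusedVariables false
set_option maxHeartbeats 1000000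


noncomputable section

variable {E : Type*} [DecidableEq E] {n : ℕ}

/-- A chirotope of rank `n+1` on the ground set `E`: a nonzero alternating map
`(Fin (n+1) → E) → {0,±1}` satisfying the Grassmann–Plücker relations over the
sign hyperfield. -/
def IsChirotope (φ : (Fin (n + 1) → E) → ℝ) : Prop :=
  (∃ b, φ b ≠ 0) ∧
  (∀ b, φ b = 0 ∨ φ b = 1 ∨ φ b = -1) ∧
  (∀ (b : Fin (n + 1) → E) (σ : Equiv.Perm (Fin (n + 1))),
    φ (b ∘ σ) = ((Equiv.Perm.sign σ : ℤ) : ℝ) * φ b) ∧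
  (∀ (b : Fin (n + 1) → E) (i j : Fin (n + 1)), i ≠ j → b i = b j → φ b = 0) ∧
  (∀ (x : Fin (n + 2) → E) (y : Fin n → E),
    (∀ k : Fin (n + 2), ((-1 : ℝ) ^ (k : ℕ)) * φ (x ∘ k.succAbove) * φ (Fin.cons (x k) y) = 0) ∨
    (∃ k l : Fin (n + 2),
      0 < ((-1 : ℝ) ^ (k : ℕ)) * φ (x ∘ k.succAbove) * φ (Fin.cons (x k) y) ∧
      ((-1 : ℝ) ^ (l : ℕ)) * φ (x ∘ l.succAbove) * φ (Fin.cons (x l) y) < 0))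

/-- Composition of signed sets. -/
def scomp (X Y : E → ℝ) : E → ℝ := fun e => if X e ≠ 0 then X e else Y e

/-- A cocircuit of the oriented matroid with chirotope `φ`. -/
def IsCocircuit (φ : (Fin (n + 1) → E) → ℝ) (X : E → ℝ) : Prop :=
  X ≠ 0 ∧ ∃ (ε : ℝ) (μ : Fin n → E), (ε = 1 ∨ ε = -1) ∧ ∀ e, X e = ε * φ (Fin.cons e μ)

/-- Covectors: finite compositions of cocircuits (the empty composition is `0`). -/
inductive IsCovector (φ : (Fin (n + 1) → E) → ℝ) : (E → ℝ) → Prop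
  | zero : IsCovector φ 0
  | cocirc (X : E → ℝ) : IsCocircuit φ X → IsCovector φ X
  | comp (X Y : E → ℝ) : IsCocircuit φ X → IsCovector φ Y → IsCovector φ (scomp X Y)

/-- The partial order on signed sets: `X ≤ Y` iff `Y` agrees with `X` on the
support of `X`. -/
def sle (X Y : E → ℝ) : Prop := ∀ e, X e ≠ 0 → Y e = X e

/-- A finite set is independent iff it is contained in (the range of) a basis. -/
def Indep (φ : (Fin (n + 1) → E) → ℝ) (S : Finset E) : Prop :=
  ∃ b : Fin (n + 1) → E, φ b ≠ 0 ∧ (S : Set E) ⊆ Set.range b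

/-- Flats of the underlying matroid: sets closed under the closure operator. -/
def IsFlat (φ : (Fin (n + 1) → E) → ℝ) (F : Set E) : Prop :=
  ∀ e : E, (∃ S : Finset E, (S : Set E) ⊆ F ∧ Indep φ S ∧ ¬ Indep φ (insert e S)) → e ∈ F


namespace OMAux
variable {φ : (Fin (n + 1) → E) → ℝ}

/-- The range of a tuple, as a `Finset`. -/
def bset (b : Fin (n+1) → E) : Finset E := Finset.image b Finset.univ

variable {φ : (Fin (n + 1) → E) → ℝ}

lemma chi_inj (hφ : IsChirotope φ) {b : Fin (n+1) → E} (hb : φ b ≠ 0) :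
    Function.Injective b := by
  intro i j h
  by_contra hne
  exact hb (hφ.2.2.2.1 b i j hne h)

lemma chi_perm_ne (hφ : IsChirotope φ) (b : Fin (n+1) → E) (σ : Equiv.Perm (Fin (n+1))) :
    φ (b ∘ σ) ≠ 0 ↔ φ b ≠ 0 := by
  rw [hφ.2.2.1 b σ]
  have hs : ((Equiv.Perm.sign σ : ℤ) : ℝ) ≠ 0 := by
    simp
  simp [mul_ne_zero_iff, hs]

lemma chi_reorder (hφ : IsChirotope φ) {b c : Fin (n+1) → E} (hc : φ c ≠ 0)
    (hb : Function.Injective b) (h : Set.range b = Set.range c) : φ b ≠ 0 := by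
  have hcinj := chi_inj hφ hc
  set e : Fin (n+1) ≃ Fin (n+1) :=
    (Equiv.ofInjective b hb).trans ((Equiv.setCongr h).trans (Equiv.ofInjective c hcinj).symm)
    with he
  have hbc : b = c ∘ e := by
    funext i
    have := Equiv.apply_ofInjective_symm hcinj ((Equiv.setCongr h) (Equiv.ofInjective b hb i))
    simpa [he] using this.symm
  rw [hbc]
  exact (chi_perm_ne hφ c e).mpr hc

lemma chi_cons_self (hφ : IsChirotope φ) {b : Fin (n+1) → E} (hb : φ b ≠ 0) (i : Fin (n+1)) :
    φ (Fin.cons (b i) (b ∘ i.succAbove)) ≠ 0 := by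
  have hbinj := chi_inj hφ hb
  apply chi_reorder hφ hb
  · rw [Fin.cons_injective_iff]
    constructor
    · rw [Set.range_comp, Fin.range_succAbove]
      rintro ⟨j, hj, hbj⟩
      exact hj (hbinj hbj)
    · exact hbinj.comp (Fin.succAbove_right_injective)
  · rw [Fin.range_cons, Set.range_comp, Fin.range_succAbove, ← Set.image_insert_eq]
    have : insert i ({i}ᶜ : Set (Fin (n+1))) = Set.univ := by
      ext x; by_cases hx : x = i <;> simp [hx]
    rw [this, Set.image_univ]

lemma chi_gp1 (hφ : IsChirotope φ) {b : Fin (n+1) → E} {a : E} {μ : Fin n → E}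
    (hb : φ b ≠ 0) (ha : φ (Fin.cons a μ) ≠ 0) :
    ∃ j : Fin (n+1), φ (Fin.cons a (b ∘ j.succAbove)) ≠ 0 ∧ φ (Fin.cons (b j) μ) ≠ 0 := by
  have h0 : (Fin.cons a b : Fin (n+2) → E) ∘ (0 : Fin (n+2)).succAbove = b := by
    funext i; simp [Fin.zero_succAbove]
  have hsucc : ∀ j : Fin (n+1), (Fin.cons a b : Fin (n+2) → E) ∘ (j.succ).succAbove
      = Fin.cons a (b ∘ j.succAbove) := by
    intro j; funext i
    refine Fin.cases ?_ ?_ i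
    · simp [Fin.succ_succAbove_zero]
    · intro i'
      simp [Fin.succ_succAbove_succ]
  rcases hφ.2.2.2.2 (Fin.cons a b) μ with hall | ⟨k, l, hk, hl⟩
  · exfalso
    have h := hall 0
    rw [h0] at h
    simp only [Fin.val_zero, pow_zero, one_mul, Fin.cons_zero] at h
    rcases mul_eq_zero.mp h with h | h
    exacts [hb h, ha h]
  · have hkl : k ≠ l := by
      rintro rfl; exact absurd hk (asymm hl)
    have : ∃ m : Fin (n+2), m ≠ 0 ∧
        ((-1 : ℝ) ^ (m : ℕ)) * φ ((Fin.cons a b : Fin (n+2) → E) ∘ m.succAbove)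
          * φ (Fin.cons ((Fin.cons a b : Fin (n+2) → E) m) μ) ≠ 0 := by
      by_cases hk0 : k = 0
      · exact ⟨l, fun h => hkl (by rw [hk0, h]), ne_of_lt hl⟩
      · exact ⟨k, hk0, ne_of_gt hk⟩
    obtain ⟨m, hm0, hm⟩ := this
    obtain ⟨j, rfl⟩ := Fin.eq_succ_of_ne_zero hm0
    rw [hsucc j] at hm
    have hm' := hm
    rw [Fin.cons_succ] at hm'
    have h1 : φ (Fin.cons a (b ∘ j.succAbove)) ≠ 0 := fun h => hm' (by rw [h]; ring)
    have h2 : φ (Fin.cons (b j) μ) ≠ 0 := fun h => hm' (by rw [h]; ring)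
    exact ⟨j, h1, h2⟩

lemma chi_exch (hφ : IsChirotope φ) {c c' : Fin (n+1) → E} (hc : φ c ≠ 0) (hc' : φ c' ≠ 0)
    (i : Fin (n+1)) :
    ∃ j, φ (Fin.cons (c' j) (c ∘ i.succAbove)) ≠ 0 := by
  obtain ⟨j, _, h2⟩ := chi_gp1 hφ hc' (chi_cons_self hφ hc i)
  exact ⟨j, h2⟩



/-- The range of a tuple, as a `Finset`. -/
lemma coe_bset (b : Fin (n+1) → E) : (bset b : Set E) = Set.range b := by
  simp [bset]

lemma mem_bset {b : Fin (n+1) → E} {x : E} : x ∈ bset b ↔ ∃ i, b i = x := by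
  simp [bset]

lemma indep_iff {S : Finset E} : Indep φ S ↔ ∃ b, φ b ≠ 0 ∧ S ⊆ bset b := by
  unfold Indep
  refine exists_congr fun b => and_congr_right fun _ => ?_
  rw [← coe_bset, Finset.coe_subset]

lemma indep_subset {S T : Finset E} (h : T ⊆ S) (hS : Indep φ S) : Indep φ T := by
  obtain ⟨b, hb, hSb⟩ := hS
  exact ⟨b, hb, subset_trans (by exact_mod_cast h) hSb⟩

lemma indep_empty (hφ : IsChirotope φ) : Indep φ (∅ : Finset E) := by
  obtain ⟨b, hb⟩ := hφ.1
  exact ⟨b, hb, by simp⟩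

lemma card_bset (hφ : IsChirotope φ) {b : Fin (n+1) → E} (hb : φ b ≠ 0) :
    (bset b).card = n + 1 := by
  rw [bset, Finset.card_image_of_injective _ (chi_inj hφ hb), Finset.card_univ,
    Fintype.card_fin]

lemma indep_card_le (hφ : IsChirotope φ) {S : Finset E} (hS : Indep φ S) : S.card ≤ n + 1 := by
  obtain ⟨b, hb, hSb⟩ := indep_iff.mp hS
  calc S.card ≤ (bset b).card := Finset.card_le_card hSb
    _ = n + 1 := card_bset hφ hb

lemma bset_cons (x : E) (g : Fin n → E) :
    bset (Fin.cons x g : Fin (n+1) → E) = insert x (Finset.image g Finset.univ) := by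
  apply Finset.coe_injective
  rw [coe_bset, Fin.range_cons, Finset.coe_insert]
  simp

lemma bset_drop {c : Fin (n+1) → E} (hc : Function.Injective c) (i : Fin (n+1)) :
    Finset.image (c ∘ i.succAbove) Finset.univ = (bset c).erase (c i) := by
  apply Finset.coe_injective
  rw [Finset.coe_erase, coe_bset]
  ext x
  simp only [Finset.coe_image, Finset.coe_univ, Set.image_univ, Set.mem_range,
    Set.mem_diff, Set.mem_singleton_iff]
  constructor
  · rintro ⟨j, rfl⟩
    exact ⟨⟨i.succAbove j, rfl⟩, fun h => (Fin.succAbove_ne i j) (hc h)⟩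
  · rintro ⟨⟨k, rfl⟩, hk⟩
    obtain ⟨j, rfl⟩ := Fin.exists_succAbove_eq (fun h : k = i => hk (by rw [h]))
    exact ⟨j, rfl⟩

lemma exch_set (hφ : IsChirotope φ) {c c' : Fin (n+1) → E} (hc : φ c ≠ 0) (hc' : φ c' ≠ 0)
    {z : E} (hz : z ∈ bset c) :
    ∃ (d : Fin (n+1) → E) (y : E), φ d ≠ 0 ∧ y ∈ bset c' ∧
      bset d = insert y ((bset c).erase z) ∧ y ∉ (bset c).erase z := by
  obtain ⟨i, rfl⟩ := mem_bset.mp hz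
  obtain ⟨j, hj⟩ := chi_exch hφ hc hc' i
  refine ⟨Fin.cons (c' j) (c ∘ i.succAbove), c' j, hj, mem_bset.mpr ⟨j, rfl⟩, ?_, ?_⟩
  · rw [bset_cons, bset_drop (chi_inj hφ hc) i]
  · rw [← bset_drop (chi_inj hφ hc) i]
    intro hmem
    have hni : c' j ∉ Set.range (c ∘ i.succAbove) :=
      (Fin.cons_injective_iff.mp (chi_inj hφ hj)).1
    obtain ⟨k, -, hk⟩ := Finset.mem_image.mp hmem
    exact hni ⟨k, hk⟩

lemma aug (hφ : IsChirotope φ) {I J : Finset E} (hI : Indep φ I) (hJ : Indep φ J)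
    (hcard : I.card < J.card) : ∃ e ∈ J, e ∉ I ∧ Indep φ (insert e I) := by
  obtain ⟨c₂, hc₂, hJc₂⟩ := indep_iff.mp hJ
  set B₂ := bset c₂ with hB₂
  have key : ∀ m : ℕ, ∀ c : Fin (n+1) → E, φ c ≠ 0 → I ⊆ bset c →
      n + 1 ≤ (bset c ∩ B₂).card + m → ∃ e ∈ J, e ∉ I ∧ Indep φ (insert e I) := by
    intro m
    induction m with
    | zero =>
      intro c hc hIc hm
      have h1 : bset c ∩ B₂ = bset c := by
        apply Finset.eq_of_subset_of_card_le Finset.inter_subset_left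
        rw [card_bset hφ hc]; omega
      have h2 : bset c = B₂ := by
        apply Finset.eq_of_subset_of_card_le
        · intro x hx
          have : x ∈ bset c ∩ B₂ := h1.symm ▸ hx
          exact Finset.mem_inter.mp this |>.2
        · rw [card_bset hφ hc, card_bset hφ hc₂]
      have hns : ¬ J ⊆ I := fun h => absurd (Finset.card_le_card h) (by omega)
      obtain ⟨e, heJ, heI⟩ := Finset.not_subset.mp hns
      refine ⟨e, heJ, heI, indep_iff.mpr ⟨c, hc, ?_⟩⟩
      rw [Finset.insert_subset_iff]
      exact ⟨h2 ▸ hJc₂ heJ, hIc⟩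
    | succ m ih =>
      intro c hc hIc hm
      by_cases hA : ∃ z ∈ bset c, z ∉ B₂ ∧ z ∉ I
      · obtain ⟨z, hzc, hzB₂, hzI⟩ := hA
        obtain ⟨d, y, hd, hyB₂, hbd, hyer⟩ := exch_set hφ hc hc₂ hzc
        have hyz : y ≠ z := fun h => hzB₂ (h ▸ hyB₂)
        have hyc : y ∉ bset c := fun h => hyer (Finset.mem_erase.mpr ⟨hyz, h⟩)
        have hId : I ⊆ bset d := by
          rw [hbd]
          intro x hx
          exact Finset.mem_insert_of_mem (Finset.mem_erase.mpr
            ⟨fun h => hzI (h ▸ hx), hIc hx⟩)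
        apply ih d hd hId
        have hsub : insert y (bset c ∩ B₂) ⊆ bset d ∩ B₂ := by
          rw [hbd]
          intro x hx
          rcases Finset.mem_insert.mp hx with rfl | hx
          · exact Finset.mem_inter.mpr ⟨Finset.mem_insert_self _ _, hyB₂⟩
          · obtain ⟨hx1, hx2⟩ := Finset.mem_inter.mp hx
            exact Finset.mem_inter.mpr ⟨Finset.mem_insert_of_mem
              (Finset.mem_erase.mpr ⟨fun h => hzB₂ (h ▸ hx2), hx1⟩), hx2⟩
        have hynotin : y ∉ bset c ∩ B₂ := fun h => hyc (Finset.mem_inter.mp h).1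
        have := Finset.card_le_card hsub
        rw [Finset.card_insert_of_notMem hynotin] at this
        omega
      · push_neg at hA
        -- counting
        set B := bset c with hB
        have hBB₂ : ∀ z ∈ B, z ∉ B₂ → z ∈ I := hA
        by_contra hcon
        push_neg at hcon
        have hJBI : ∀ e ∈ J, e ∈ B → e ∈ I := by
          intro e heJ heB
          by_contra heI
          exact (hcon e heJ heI) (indep_iff.mpr ⟨c, hc, Finset.insert_subset_iff.mpr ⟨heB, hIc⟩⟩)
        have h1 : J ∩ B ⊆ I ∩ B₂ := by
          intro x hx
          obtain ⟨hx1, hx2⟩ := Finset.mem_inter.mp hx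
          exact Finset.mem_inter.mpr ⟨hJBI x hx1 hx2, hJc₂ hx1⟩
        have h2 : J \ B ⊆ B₂ \ B := fun x hx => by
          obtain ⟨hx1, hx2⟩ := Finset.mem_sdiff.mp hx
          exact Finset.mem_sdiff.mpr ⟨hJc₂ hx1, hx2⟩
        have h3 : B \ B₂ ⊆ I \ B₂ := fun x hx => by
          obtain ⟨hx1, hx2⟩ := Finset.mem_sdiff.mp hx
          exact Finset.mem_sdiff.mpr ⟨hBB₂ x hx1 hx2, hx2⟩
        have e1 := Finset.card_inter_add_card_sdiff J B
        have e2 := Finset.card_inter_add_card_sdiff I B₂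
        have e3 := Finset.card_inter_add_card_sdiff B₂ B
        have e4 := Finset.card_inter_add_card_sdiff B B₂
        have hBcard : B.card = n + 1 := card_bset hφ hc
        have hB₂card : B₂.card = n + 1 := card_bset hφ hc₂
        have c1 := Finset.card_le_card h1
        have c2 := Finset.card_le_card h2
        have c3 := Finset.card_le_card h3
        have hcomm : (B₂ ∩ B).card = (B ∩ B₂).card := by rw [Finset.inter_comm]
        omega
  obtain ⟨c₁, hc₁, hIc₁⟩ := indep_iff.mp hI
  exact key (n+1) c₁ hc₁ hIc₁ (by omega)

lemma extend (hφ : IsChirotope φ) {M : Finset E} (hM : Indep φ M) :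
    ∀ (m : ℕ) (T : Finset E), Indep φ T → M.card ≤ T.card + m →
      ∃ T', T ⊆ T' ∧ T' ⊆ T ∪ M ∧ Indep φ T' ∧ M.card ≤ T'.card := by
  intro m
  induction m with
  | zero => exact fun T hT h => ⟨T, subset_rfl, Finset.subset_union_left, hT, by omega⟩
  | succ m ih =>
    intro T hT h
    by_cases hc : M.card ≤ T.card
    · exact ⟨T, subset_rfl, Finset.subset_union_left, hT, hc⟩
    · obtain ⟨e, heM, heT, hins⟩ := aug hφ hT hM (by omega)
      obtain ⟨T', h1, h2, h3, h4⟩ := ih (insert e T) hins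
        (by rw [Finset.card_insert_of_notMem heT]; omega)
      refine ⟨T', subset_trans (Finset.subset_insert _ _) h1, ?_, h3, h4⟩
      intro x hx
      rcases Finset.mem_union.mp (h2 hx) with hx' | hx'
      · rcases Finset.mem_insert.mp hx' with rfl | hx''
        · exact Finset.mem_union_right _ heM
        · exact Finset.mem_union_left _ hx''
      · exact Finset.mem_union_right _ hx'



/-- The key "hyperplane" property. -/
lemma hyperplane_insert (hφ : IsChirotope φ) {μ : Fin n → E} {e : E}
    (he : φ (Fin.cons e μ) ≠ 0) {S : Finset E} (hS : ∀ x ∈ S, φ (Fin.cons x μ) = 0)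
    (hSi : Indep φ S) : Indep φ (insert e S) := by
  set c : Fin (n+1) → E := Fin.cons e μ with hcdef
  have hcinj : Function.Injective c := chi_inj hφ he
  have hμinj : Function.Injective μ := by
    intro i j h
    have := hcinj (a₁ := i.succ) (a₂ := j.succ) (by rw [hcdef]; simp [Fin.cons_succ, h])
    exact Fin.succ_injective _ this
  set M : Finset E := Finset.image μ Finset.univ with hMdef
  have hMcard : M.card = n := by
    rw [hMdef, Finset.card_image_of_injective _ hμinj, Finset.card_univ, Fintype.card_fin]
  have hMsub : M ⊆ bset c := by
    intro x hx
    obtain ⟨i, -, hi⟩ := Finset.mem_image.mp hx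
    exact mem_bset.mpr ⟨i.succ, by rw [hcdef, Fin.cons_succ]; exact hi⟩
  have hMind : Indep φ M := indep_iff.mpr ⟨c, he, hMsub⟩
  have hMrange : ∀ x, x ∈ M ↔ x ∈ Set.range μ := by
    intro x; rw [hMdef]; simp
  -- every independent subset of S ∪ M has at most n elements
  have claim : ∀ T : Finset E, T ⊆ S ∪ M → Indep φ T → T.card ≤ n := by
    intro T hTsub hTind
    by_contra hlt
    push_neg at hlt
    obtain ⟨x, hxT, hxM, hxins⟩ := aug hφ hMind hTind (by omega)
    have hxS : x ∈ S := by
      rcases Finset.mem_union.mp (hTsub hxT) with h | h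
      · exact h
      · exact absurd h hxM
    -- insert x M is independent of full size, so it is the range of a basis
    obtain ⟨b₁, hb₁, hsub₁⟩ := indep_iff.mp hxins
    have hcard₁ : (insert x M).card = n + 1 := by
      rw [Finset.card_insert_of_notMem hxM, hMcard]
    have heq₁ : insert x M = bset b₁ :=
      Finset.eq_of_subset_of_card_le hsub₁ (by rw [card_bset hφ hb₁, hcard₁])
    have hxμ : x ∉ Set.range μ := fun h => hxM ((hMrange x).mpr h)
    have hdinj : Function.Injective (Fin.cons x μ : Fin (n+1) → E) :=
      Fin.cons_injective_iff.mpr ⟨hxμ, hμinj⟩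
    have hrange : Set.range (Fin.cons x μ : Fin (n+1) → E) = Set.range b₁ := by
      rw [Fin.range_cons, ← coe_bset, ← heq₁, Finset.coe_insert]
      congr 1
      rw [hMdef]; simp
    exact (chi_reorder hφ hb₁ hdinj hrange) (hS x hxS)
  obtain ⟨T, hST, hTsub, hTind, hTcard⟩ := extend hφ hMind n S hSi (by omega)
  have hTsub' : T ⊆ S ∪ M := hTsub
  have hTn : T.card = n := le_antisymm (claim T hTsub' hTind) (by rw [← hMcard]; exact hTcard)
  -- now augment T from the basis c
  have hUind : Indep φ (bset c) := indep_iff.mpr ⟨c, he, subset_rfl⟩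
  obtain ⟨x, hxU, hxT, hxins⟩ := aug hφ hTind hUind (by rw [hTn, card_bset hφ he]; omega)
  by_cases hxe : x = e
  · subst hxe
    exact indep_subset (Finset.insert_subset_insert _ hST) hxins
  · exfalso
    have hxM : x ∈ M := by
      obtain ⟨i, hi⟩ := mem_bset.mp hxU
      rcases Fin.eq_zero_or_eq_succ i with rfl | ⟨j, rfl⟩
      · exact absurd (by rw [← hi, hcdef, Fin.cons_zero]) hxe
      · refine (hMrange x).mpr ⟨j, ?_⟩
        rw [← hi, hcdef, Fin.cons_succ]
    have : (insert x T).card ≤ n := claim _ (by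
      intro y hy
      rcases Finset.mem_insert.mp hy with rfl | hy
      · exact Finset.mem_union_right _ hxM
      · exact hTsub' hy) hxins
    rw [Finset.card_insert_of_notMem hxT, hTn] at this
    omega

lemma scomp_eq_zero_iff {X Y : E → ℝ} {e : E} : scomp X Y e = 0 ↔ X e = 0 ∧ Y e = 0 := by
  unfold scomp
  by_cases h : X e = 0 <;> simp [h]

lemma isFlat_univ : IsFlat φ (Set.univ : Set E) := fun _ _ => Set.mem_univ _

lemma isFlat_inter {F G : Set E} (hF : IsFlat φ F) (hG : IsFlat φ G) : IsFlat φ (F ∩ G) := by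
  rintro e ⟨S, hSsub, hSi, hni⟩
  exact ⟨hF e ⟨S, fun x hx => (hSsub hx).1, hSi, hni⟩,
    hG e ⟨S, fun x hx => (hSsub hx).2, hSi, hni⟩⟩

lemma cocircuit_zero_flat (hφ : IsChirotope φ) {X : E → ℝ} (hX : IsCocircuit φ X) :
    IsFlat φ {e | X e = 0} := by
  rintro e ⟨S, hSF, hSi, hni⟩
  obtain ⟨-, ε, μ, hε, hXe⟩ := hX
  have hεne : ε ≠ 0 := by rcases hε with rfl | rfl <;> norm_num
  show X e = 0
  by_contra he0
  have he : φ (Fin.cons e μ) ≠ 0 := fun h => he0 (by rw [hXe e, h, mul_zero])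
  refine hni (hyperplane_insert hφ he ?_ hSi)
  intro x hx
  have hx0 : X x = 0 := hSF hx
  rw [hXe x] at hx0
  exact (mul_eq_zero.mp hx0).resolve_left hεne

lemma covector_zero_flat (hφ : IsChirotope φ) {X : E → ℝ} (hX : IsCovector φ X) :
    IsFlat φ {e | X e = 0} := by
  induction hX with
  | zero =>
    intro e _
    show (0 : E → ℝ) e = 0
    rfl
  | cocirc X hX => exact cocircuit_zero_flat hφ hX
  | comp X Y hX _ ihY =>
    have : {e | scomp X Y e = 0} = {e | X e = 0} ∩ {e | Y e = 0} := by
      ext e; simpa using scomp_eq_zero_iff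
    rw [this]
    exact isFlat_inter (cocircuit_zero_flat hφ hX) ihY

lemma strict_mono_zero (X Y : E → ℝ) (hle : sle X Y) (hne : X ≠ Y) :
    {e | Y e = 0} ⊂ {e | X e = 0} := by
  rw [Set.ssubset_iff_subset_ne]
  constructor
  · intro e (he : Y e = 0)
    show X e = 0
    by_contra h
    exact h (by rw [← hle e h, he])
  · intro heq
    apply hne
    funext e
    by_cases h : X e = 0
    · have : e ∈ {e | Y e = 0} := heq ▸ h
      rw [h, this]
    · exact (hle e h).symm

lemma chain_indep (hφ : IsChirotope φ) :
    ∀ (l : List (E → ℝ)) (W : E → ℝ), IsCovector φ W → (∀ X ∈ l, IsCovector φ X) →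
      List.Chain (fun X Y => sle X Y ∧ X ≠ Y) W l →
      ∃ S : Finset E, S.card = l.length ∧ Indep φ S ∧ ∀ x ∈ S, W x = 0 := by
  intro l
  induction l with
  | nil => exact fun W _ _ _ => ⟨∅, rfl, indep_empty hφ, by simp⟩
  | cons X t ih =>
    intro W hW hmem hchain
    rw [List.Chain, List.chain_cons] at hchain
    obtain ⟨⟨hle, hne⟩, hchain'⟩ := hchain
    have hXcov := hmem X (List.mem_cons_self (a := X) (l := t))
    obtain ⟨S, hcard, hSi, hSz⟩ := ih X hXcov
      (fun Z hZ => hmem Z (List.mem_cons_of_mem _ hZ)) hchain'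
    have hss := strict_mono_zero W X hle hne
    obtain ⟨e, heW, heX⟩ := Set.exists_of_ssubset hss
    have heW' : W e = 0 := heW
    have heX' : X e ≠ 0 := fun h => heX h
    have heS : e ∉ S := fun h => heX' (hSz e h)
    have hins : Indep φ (insert e S) := by
      by_contra hni
      exact heX (covector_zero_flat hφ hXcov e ⟨S, fun x hx => hSz x hx, hSi, hni⟩)
    refine ⟨insert e S, ?_, hins, ?_⟩
    · rw [Finset.card_insert_of_notMem heS, hcard, List.length_cons]
    · intro x hx
      rcases Finset.mem_insert.mp hx with rfl | hx
      · exact heW'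
      · have hx0 : X x = 0 := hSz x hx
        by_contra hW0
        exact hW0 ((hle x hW0).symm.trans hx0)

lemma foldr_covector (hφ : IsChirotope φ) :
    ∀ l : List (E → ℝ), (∀ Z ∈ l, IsCocircuit φ Z) →
      IsCovector φ (l.foldr scomp 0) ∧ ∀ e, (l.foldr scomp 0) e = 0 ↔ ∀ Z ∈ l, Z e = 0 := by
  intro l
  induction l with
  | nil => exact fun _ => ⟨IsCovector.zero, fun e => by simp [List.foldr]⟩
  | cons Z t ih =>
    intro hmem
    obtain ⟨ihc, ihz⟩ := ih fun W hW => hmem W (List.mem_cons_of_mem _ hW)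
    refine ⟨IsCovector.comp Z _ (hmem Z (List.mem_cons_self (a := Z) (l := t))) ihc, fun e => ?_⟩
    rw [List.foldr_cons, scomp_eq_zero_iff]
    simp [ihz e]



/-- Rearrange a basis so that a given independent subset comes first. -/
lemma arrange (hφ : IsChirotope φ) {b : Fin (n+1) → E} (hb : φ b ≠ 0) {I : Finset E}
    (hI : I ⊆ bset b) :
    ∃ c : Fin (n+1) → E, φ c ≠ 0 ∧ bset c = bset b ∧
      ∀ j : Fin (n+1), c j ∈ I ↔ (j : ℕ) < I.card := by
  classical
  set r := I.card with hr
  set D := bset b \ I with hD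
  have hrle : r ≤ n + 1 := by
    rw [hr, ← card_bset hφ hb]
    exact Finset.card_le_card hI
  have hDcard : D.card = n + 1 - r := by
    rw [hD, Finset.card_sdiff_of_subset hI, card_bset hφ hb]
  set c : Fin (n+1) → E := fun j =>
    if h : (j : ℕ) < r then ((I.equivFin.symm ⟨(j : ℕ), h⟩ : I) : E)
    else ((D.equivFin.symm ⟨(j : ℕ) - r, by omega⟩ : D) : E) with hc
  have hmemI : ∀ j : Fin (n+1), (h : (j : ℕ) < r) → c j ∈ I := by
    intro j h
    rw [hc]; simp only [h, dif_pos]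
    exact (I.equivFin.symm ⟨(j : ℕ), h⟩).2
  have hmemD : ∀ j : Fin (n+1), ¬ ((j : ℕ) < r) → c j ∈ D := by
    intro j h
    rw [hc]; simp only [h, dif_neg, not_false_iff]
    exact (D.equivFin.symm _).2
  have hcinj : Function.Injective c := by
    intro j k h
    by_cases hj : (j : ℕ) < r <;> by_cases hk : (k : ℕ) < r
    · rw [hc] at h
      simp only [hj, hk, dif_pos] at h
      have := I.equivFin.symm.injective (Subtype.coe_injective h)
      have := congrArg Fin.val this
      exact Fin.ext this
    · exact absurd (h ▸ hmemI j hj) (Finset.mem_sdiff.mp (hmemD k hk)).2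
    · exact absurd (h.symm ▸ hmemI k hk) (Finset.mem_sdiff.mp (hmemD j hj)).2
    · rw [hc] at h
      simp only [hj, hk, dif_neg, not_false_iff] at h
      have := D.equivFin.symm.injective (Subtype.coe_injective h)
      have hv := congrArg Fin.val this
      simp only [] at hv
      have hj' := j.isLt
      have hk' := k.isLt
      exact Fin.ext (by omega)
  have hsub : bset c ⊆ bset b := by
    intro x hx
    obtain ⟨j, rfl⟩ := mem_bset.mp hx
    by_cases hj : (j : ℕ) < r
    · exact hI (hmemI j hj)
    · exact (Finset.mem_sdiff.mp (hmemD j hj)).1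
  have hbsetc : bset c = bset b := by
    apply Finset.eq_of_subset_of_card_le hsub
    rw [card_bset hφ hb, bset, Finset.card_image_of_injective _ hcinj, Finset.card_univ,
      Fintype.card_fin]
  have hcne : φ c ≠ 0 := by
    apply chi_reorder hφ hb hcinj
    rw [← coe_bset, ← coe_bset, hbsetc]
  refine ⟨c, hcne, hbsetc, fun j => ⟨?_, fun h => hmemI j h⟩⟩
  intro hj
  by_contra hlt
  exact (Finset.mem_sdiff.mp (hmemD j hlt)).2 hj

/-- Every flat is the zero set of a covector. -/
lemma flat_surj (hφ : IsChirotope φ) {F : Set E} (hF : IsFlat φ F) :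
    ∃ X : E → ℝ, IsCovector φ X ∧ {e | X e = 0} = F := by
  classical
  set K : Set ℕ := {k | ∃ S : Finset E, (S : Set E) ⊆ F ∧ Indep φ S ∧ S.card = k} with hK
  have hK0 : 0 ∈ K := ⟨∅, by simp, indep_empty hφ, rfl⟩
  have hKbdd : ∀ k ∈ K, k ≤ n + 1 := by
    rintro k ⟨S, -, hSi, rfl⟩
    exact indep_card_le hφ hSi
  have hbdd : BddAbove K := ⟨n + 1, fun k hk => hKbdd k hk⟩
  set r := sSup K with hrdef
  obtain ⟨I, hIF, hIind, hIcard⟩ : r ∈ K := Nat.sSup_mem ⟨0, hK0⟩ hbdd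
  have hrmax : ∀ S : Finset E, (S : Set E) ⊆ F → Indep φ S → S.card ≤ r := by
    intro S hSF hSi
    exact le_csSup hbdd ⟨S, hSF, hSi, rfl⟩
  by_cases hrtop : r = n + 1
  · -- F is everything
    have hFuniv : F = Set.univ := by
      ext e
      simp only [Set.mem_univ, iff_true]
      by_cases heI : e ∈ I
      · exact hIF heI
      · refine hF e ⟨I, hIF, hIind, fun hind => ?_⟩
        have := indep_card_le hφ hind
        rw [Finset.card_insert_of_notMem heI, hIcard, hrtop] at this
        omega
    exact ⟨0, IsCovector.zero, by rw [hFuniv]; ext e; simp⟩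
  · have hrn : r ≤ n := by
      have := hKbdd r ⟨I, hIF, hIind, hIcard⟩
      omega
    obtain ⟨b, hb, hIb⟩ := indep_iff.mp hIind
    obtain ⟨c, hc, hbc, hchar⟩ := arrange hφ hb hIb
    rw [hIcard] at hchar
    have hIc : I ⊆ bset c := hbc ▸ hIb
    -- the cocircuits
    set C : Fin (n+1) → (E → ℝ) := fun j x => φ (Fin.cons x (c ∘ j.succAbove)) with hCdef
    have hCco : ∀ j : Fin (n+1), IsCocircuit φ (C j) := by
      intro j
      constructor
      · intro h
        exact chi_cons_self hφ hc j (by rw [hCdef] at h; exact congrFun h (c j))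
      · exact ⟨1, c ∘ j.succAbove, Or.inl rfl, fun e => (one_mul _).symm⟩
    set P : Fin (n+1) → Bool := fun j => decide (r ≤ (j : ℕ)) with hP
    set L : List (E → ℝ) := ((List.finRange (n+1)).filter P).map C with hL
    have hLmem : ∀ Z ∈ L, IsCocircuit φ Z := by
      intro Z hZ
      rw [hL] at hZ
      obtain ⟨j, -, rfl⟩ := List.mem_map.mp hZ
      exact hCco j
    obtain ⟨hcov, hzero⟩ := foldr_covector hφ L hLmem
    refine ⟨L.foldr scomp 0, hcov, ?_⟩
    have hzero' : ∀ e, (L.foldr scomp 0) e = 0 ↔ ∀ j : Fin (n+1), r ≤ (j : ℕ) → C j e = 0 := by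
      intro e
      rw [hzero e, hL]
      constructor
      · intro h j hj
        exact h (C j) (List.mem_map.mpr ⟨j, List.mem_filter.mpr
          ⟨List.mem_finRange j, by rw [hP]; simpa using hj⟩, rfl⟩)
      · rintro h Z hZ
        obtain ⟨j, hjmem, rfl⟩ := List.mem_map.mp hZ
        have := (List.mem_filter.mp hjmem).2
        rw [hP] at this
        exact h j (by simpa using this)
    ext e
    simp only [Set.mem_setOf_eq]
    rw [hzero' e]
    constructor
    · -- e in all the hyperplanes ⇒ e ∈ F
      intro h
      by_cases heI : e ∈ I
      · exact hIF heI
      · have henb : e ∉ bset c := by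
          intro hmem
          obtain ⟨j, rfl⟩ := mem_bset.mp hmem
          by_cases hj : (j : ℕ) < r
          · exact heI ((hchar j).mpr hj)
          · exact (chi_cons_self hφ hc j) (h j (by omega))
        refine hF e ⟨I, hIF, hIind, fun hind => ?_⟩
        -- extend insert e I to a full basis inside insert e (bset c)
        have hUind : Indep φ (bset c) := indep_iff.mpr ⟨c, hc, subset_rfl⟩
        obtain ⟨T, hsubT, hTsub, hTind, hTcard⟩ := extend hφ hUind (n+1) (insert e I)
          hind (by rw [card_bset hφ hc]; omega)
        have hTcard' : T.card = n + 1 := le_antisymm (indep_card_le hφ hTind)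
          (by rw [← card_bset hφ hc]; exact hTcard)
        have heT : e ∈ T := hsubT (Finset.mem_insert_self _ _)
        have hTsub' : T ⊆ insert e (bset c) := by
          intro x hx
          rcases Finset.mem_union.mp (hTsub hx) with hx' | hx'
          · rcases Finset.mem_insert.mp hx' with rfl | hx''
            · exact Finset.mem_insert_self _ _
            · exact Finset.mem_insert_of_mem (hIc hx'')
          · exact Finset.mem_insert_of_mem hx'
        have hTd : T \ bset c = {e} := by
          ext x
          simp only [Finset.mem_sdiff, Finset.mem_singleton]
          constructor
          · rintro ⟨hx1, hx2⟩
            rcases Finset.mem_insert.mp (hTsub' hx1) with rfl | hx''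
            · rfl
            · exact absurd hx'' hx2
          · rintro rfl
            exact ⟨heT, henb⟩
        have e1 := Finset.card_inter_add_card_sdiff T (bset c)
        have e2 := Finset.card_inter_add_card_sdiff (bset c) T
        rw [hTd, Finset.card_singleton, hTcard'] at e1
        have hcomm : (bset c ∩ T).card = (T ∩ bset c).card := by rw [Finset.inter_comm]
        rw [card_bset hφ hc] at e2
        have hone : (bset c \ T).card = 1 := by omega
        obtain ⟨z, hz⟩ := Finset.card_eq_one.mp hone
        have hzc : z ∈ bset c := by
          have : z ∈ bset c \ T := hz ▸ Finset.mem_singleton_self z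
          exact (Finset.mem_sdiff.mp this).1
        have hzT : z ∉ T := by
          have : z ∈ bset c \ T := hz ▸ Finset.mem_singleton_self z
          exact (Finset.mem_sdiff.mp this).2
        obtain ⟨j₀, rfl⟩ := mem_bset.mp hzc
        have hj₀r : r ≤ (j₀ : ℕ) := by
          by_contra hlt
          exact hzT (hsubT (Finset.mem_insert_of_mem ((hchar j₀).mpr (by omega))))
        -- T = insert e ((bset c).erase z)
        have hTeq : T = insert e ((bset c).erase (c j₀)) := by
          apply Finset.eq_of_subset_of_card_le
          · intro x hx
            rcases Finset.mem_insert.mp (hTsub' hx) with rfl | hx''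
            · exact Finset.mem_insert_self _ _
            · exact Finset.mem_insert_of_mem (Finset.mem_erase.mpr
                ⟨fun hhh => hzT (hhh ▸ hx), hx''⟩)
          · rw [Finset.card_insert_of_notMem (fun hcon => henb (Finset.erase_subset _ _ hcon)),
              Finset.card_erase_of_mem hzc, card_bset hφ hc, hTcard']
            omega
        -- the tuple cons e (c ∘ j₀.succAbove) is a basis, contradiction
        obtain ⟨b₁, hb₁, hTb₁⟩ := indep_iff.mp hTind
        have hTbeq : T = bset b₁ := Finset.eq_of_subset_of_card_le hTb₁
          (by rw [card_bset hφ hb₁, hTcard'])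
        have hdinj : Function.Injective (Fin.cons e (c ∘ j₀.succAbove) : Fin (n+1) → E) := by
          rw [Fin.cons_injective_iff]
          constructor
          · intro hcon
            apply henb
            obtain ⟨k, hk⟩ := hcon
            exact mem_bset.mpr ⟨j₀.succAbove k, hk⟩
          · exact (chi_inj hφ hc).comp (Fin.succAbove_right_injective)
        have hrange : Set.range (Fin.cons e (c ∘ j₀.succAbove) : Fin (n+1) → E)
            = Set.range b₁ := by
          rw [Fin.range_cons, ← coe_bset, ← hTbeq, hTeq, Finset.coe_insert]
          congr 1
          have hbd := bset_drop (chi_inj hφ hc) j₀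
          rw [← hbd, Finset.coe_image, Finset.coe_univ, Set.image_univ]
        exact (chi_reorder hφ hb₁ hdinj hrange) (h j₀ hj₀r)
    · -- e ∈ F ⇒ e in all the hyperplanes
      intro heF j hj
      by_cases heI : e ∈ I
      · -- e appears among the first r entries of c, which survive dropping j
        obtain ⟨j', hj'⟩ := mem_bset.mp (hIc heI)
        have hj'r : (j' : ℕ) < r := (hchar j').mp (hj' ▸ heI)
        have hne : j' ≠ j := fun hcon => by omega
        obtain ⟨k, hk⟩ := Fin.exists_succAbove_eq hne
        apply hφ.2.2.2.1 (Fin.cons e (c ∘ j.succAbove)) 0 k.succ (Fin.succ_ne_zero k).symm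
        rw [Fin.cons_zero, Fin.cons_succ]
        show e = c (j.succAbove k)
        rw [hk, hj']
      · by_contra hne
        have hind : Indep φ (insert e I) := by
          refine indep_iff.mpr ⟨Fin.cons e (c ∘ j.succAbove), hne, ?_⟩
          intro x hx
          rcases Finset.mem_insert.mp hx with rfl | hxI
          · exact mem_bset.mpr ⟨0, Fin.cons_zero _ _⟩
          · obtain ⟨j', hj'⟩ := mem_bset.mp (hIc hxI)
            have hj'r : (j' : ℕ) < r := (hchar j').mp (hj' ▸ hxI)
            have hnej : j' ≠ j := fun hcon => by omega
            obtain ⟨k, hk⟩ := Fin.exists_succAbove_eq hnej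
            refine mem_bset.mpr ⟨k.succ, ?_⟩
            rw [Fin.cons_succ]
            show c (j.succAbove k) = x
            rw [hk, hj']
        have := hrmax (insert e I) (by
          rw [Finset.coe_insert]
          exact Set.insert_subset heF hIF) hind
        rw [Finset.card_insert_of_notMem heI, hIcard] at this
        omega


end OMAux

/-- The zero set of a covector is a flat; every flat arises this way; the map is
strictly monotone; hence chains of nonzero covectors have length at most the rank. -/
theorem covector_zeroSet_flat (φ : (Fin (n + 1) → E) → ℝ) (hφ : IsChirotope φ) :
    (∀ X : E → ℝ, IsCovector φ X → IsFlat φ {e | X e = 0}) ∧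
    (∀ F : Set E, IsFlat φ F → ∃ X : E → ℝ, IsCovector φ X ∧ {e | X e = 0} = F) ∧
    (∀ X Y : E → ℝ, IsCovector φ X → IsCovector φ Y → sle X Y → X ≠ Y →
      {e | Y e = 0} ⊂ {e | X e = 0}) ∧
    (∀ l : List (E → ℝ), (∀ X ∈ l, IsCovector φ X ∧ X ≠ 0) →
      l.Chain' (fun X Y => sle X Y ∧ X ≠ Y) → l.length ≤ n + 1) := by
  refine ⟨?_, ?_, ?_, ?_⟩
  · intro X hX
    exact OMAux.covector_zero_flat hφ hX
  · intro F hF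
    exact OMAux.flat_surj hφ hF
  · intro X Y _ _ hle hne
    exact OMAux.strict_mono_zero X Y hle hne
  · intro l hl hchain
    cases l with
    | nil => simp
    | cons X t =>
      have hchain' : List.Chain (fun X Y => sle X Y ∧ X ≠ Y) X t := hchain
      have hchain0 : List.Chain (fun X Y => sle X Y ∧ X ≠ Y) 0 (X :: t) :=
        List.Chain.cons ⟨fun e h => absurd rfl h, (hl X (List.mem_cons_self (a := X) (l := t))).2.symm⟩ hchain'
      obtain ⟨S, hcard, hSi, -⟩ := OMAux.chain_indep hφ (X :: t) 0 IsCovector.zero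
        (fun Z hZ => (hl Z hZ).1) hchain0
      rw [← hcard]
      exact OMAux.indep_card_le hφ hSi
end
end
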